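/- arXiv:1201.3463 — 4 statements merged into one kernel-verified Lean document; each statement's English description precedes it below -/
import Mathlib

section
/- For every pair (d1, d2) of positive integers such that d1 divides d2 or d2 divides d1, there exists a polynomial automorphism F = (F1, F2) of ℂ² with deg F1 = d1 and deg F2 = d2. -/
open MvPolynomial

/-- A polynomial map of ℂ², given by its two component polynomials. -/
abbrev PolyMap : Type := MvPolynomial (Fin 2) ℂ × MvPolynomial (Fin 2) ℂ

/-- Composition of polynomial maps: (F ∘ G). -/
noncomputable def pcomp (F G : PolyMap) : PolyMap :=
  (MvPolynomial.aeval ![G.1, G.2] F.1, MvPolynomial.aeval ![G.1, G.2] F.2)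

/-- `F` is a polynomial automorphism of ℂ²: it has a polynomial inverse. -/
def IsPolyAut (F : PolyMap) : Prop :=
  ∃ G : PolyMap, pcomp F G = (MvPolynomial.X 0, MvPolynomial.X 1) ∧
    pcomp G F = (MvPolynomial.X 0, MvPolynomial.X 1)

/-- Weighted degree with `wdeg x = w1`, `wdeg y = w2` (0 on the zero polynomial). -/
noncomputable def wdeg (w1 w2 : ℕ) (p : MvPolynomial (Fin 2) ℂ) : ℕ :=
  p.support.sup fun α => α 0 * w1 + α 1 * w2

/-- An affine automorphism: an automorphism both of whose components have total degree 1. -/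
def IsAffineAut (F : PolyMap) : Prop :=
  IsPolyAut F ∧ F.1.totalDegree = 1 ∧ F.2.totalDegree = 1

/-- The triangular map (x, y) ↦ (x, y + f(x)). -/
noncomputable def lowerT (f : Polynomial ℂ) : PolyMap :=
  (MvPolynomial.X 0,
   MvPolynomial.X 1 + Polynomial.aeval (MvPolynomial.X 0 : MvPolynomial (Fin 2) ℂ) f)

/-- The triangular map (x, y) ↦ (x + f(y), y). -/
noncomputable def upperT (f : Polynomial ℂ) : PolyMap :=
  (MvPolynomial.X 0 + Polynomial.aeval (MvPolynomial.X 1 : MvPolynomial (Fin 2) ℂ) f,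
   MvPolynomial.X 1)

/-- `chain L1 f l = T_l ∘ ⋯ ∘ T_1 ∘ L1`, where `T_i = lowerT (f i)` for odd `i`
and `T_i = upperT (f i)` for even `i`. -/
noncomputable def chain (L1 : PolyMap) (f : ℕ → Polynomial ℂ) : ℕ → PolyMap
  | 0 => L1
  | i + 1 => pcomp (if i % 2 = 0 then lowerT (f (i + 1)) else upperT (f (i + 1))) (chain L1 f i)

/- ### auxiliary lemmas -/

lemma aux_coeff01 (a k : ℕ) :
    MvPolynomial.coeff (Finsupp.single 1 (a * k)) ((X 0 + X 1 ^ a : MvPolynomial (Fin 2) ℂ) ^ k) = 1 := by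
  rw [add_pow, coeff_sum]
  have key : ∀ i ∈ Finset.range (k+1),
      coeff (Finsupp.single 1 (a*k)) ((X 0 : MvPolynomial (Fin 2) ℂ)^i * (X 1 ^ a)^(k-i) * ((k.choose i : ℕ) : MvPolynomial (Fin 2) ℂ)) =
      if i = 0 then 1 else 0 := by
    intro i hi
    rw [← pow_mul, X_pow_eq_monomial, X_pow_eq_monomial, monomial_mul, mul_one,
      ← MvPolynomial.C_eq_coe_nat, mul_comm _ (MvPolynomial.C _), coeff_C_mul, coeff_monomial]
    by_cases h : i = 0
    · subst h; simp
    · have hne : ¬((Finsupp.single (0:Fin 2) i + Finsupp.single 1 (a*(k-i))) = Finsupp.single 1 (a*k)) := by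
        intro hcon
        apply h
        have := DFunLike.congr_fun hcon 0
        simpa using this
      rw [if_neg h, if_neg hne, mul_zero]
  rw [Finset.sum_congr rfl key]
  simp

lemma aux_coeff10 (a k : ℕ) :
    MvPolynomial.coeff (Finsupp.single 0 (a * k)) ((X 1 + X 0 ^ a : MvPolynomial (Fin 2) ℂ) ^ k) = 1 := by
  rw [add_pow, coeff_sum]
  have key : ∀ i ∈ Finset.range (k+1),
      coeff (Finsupp.single 0 (a*k)) ((X 1 : MvPolynomial (Fin 2) ℂ)^i * (X 0 ^ a)^(k-i) * ((k.choose i : ℕ) : MvPolynomial (Fin 2) ℂ)) =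
      if i = 0 then 1 else 0 := by
    intro i hi
    rw [← pow_mul, X_pow_eq_monomial, X_pow_eq_monomial, monomial_mul, mul_one,
      ← MvPolynomial.C_eq_coe_nat, mul_comm _ (MvPolynomial.C _), coeff_C_mul, coeff_monomial]
    by_cases h : i = 0
    · subst h; simp
    · have hne : ¬((Finsupp.single (1:Fin 2) i + Finsupp.single 0 (a*(k-i))) = Finsupp.single 0 (a*k)) := by
        intro hcon
        apply h
        have := DFunLike.congr_fun hcon 1
        simpa using this
      rw [if_neg h, if_neg hne, mul_zero]
  rw [Finset.sum_congr rfl key]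
  simp

lemma td_pow_le (p : MvPolynomial (Fin 2) ℂ) (i : Fin 2) (a k : ℕ) (hp : p.totalDegree ≤ a) :
    ((p) ^ k).totalDegree ≤ k * a :=
  le_trans (totalDegree_pow _ _) (Nat.mul_le_mul_left _ hp)

lemma td_base01 (a : ℕ) (ha : 0 < a) :
    (X 0 + X 1 ^ a : MvPolynomial (Fin 2) ℂ).totalDegree = a := by
  apply le_antisymm
  · refine le_trans (totalDegree_add _ _) ?_
    simp only [totalDegree_X, max_le_iff]
    refine ⟨ha, le_trans (totalDegree_pow _ _) ?_⟩
    simp [totalDegree_X]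
  · have h1 : coeff (Finsupp.single 1 a) (X 0 + X 1 ^ a : MvPolynomial (Fin 2) ℂ) = 1 := by
      have := aux_coeff01 a 1
      simpa using this
    have hmem : Finsupp.single (1 : Fin 2) a ∈ (X 0 + X 1 ^ a : MvPolynomial (Fin 2) ℂ).support := by
      rw [mem_support_iff, h1]; norm_num
    have := le_totalDegree hmem
    simpa using this

lemma td_base10 (a : ℕ) (ha : 0 < a) :
    (X 1 + X 0 ^ a : MvPolynomial (Fin 2) ℂ).totalDegree = a := by
  apply le_antisymm
  · refine le_trans (totalDegree_add _ _) ?_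
    simp only [totalDegree_X, max_le_iff]
    refine ⟨ha, le_trans (totalDegree_pow _ _) ?_⟩
    simp [totalDegree_X]
  · have h1 : coeff (Finsupp.single 0 a) (X 1 + X 0 ^ a : MvPolynomial (Fin 2) ℂ) = 1 := by
      have := aux_coeff10 a 1
      simpa using this
    have hmem : Finsupp.single (0 : Fin 2) a ∈ (X 1 + X 0 ^ a : MvPolynomial (Fin 2) ℂ).support := by
      rw [mem_support_iff, h1]; norm_num
    have := le_totalDegree hmem
    simpa using this

lemma td_big01 (a k : ℕ) (ha : 0 < a) (hk : 0 < k) (h2 : 2 ≤ a * k) :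
    (X 1 + (X 0 + X 1 ^ a) ^ k : MvPolynomial (Fin 2) ℂ).totalDegree = a * k := by
  apply le_antisymm
  · refine le_trans (totalDegree_add _ _) ?_
    simp only [totalDegree_X, max_le_iff]
    constructor
    · omega
    · rw [mul_comm a k]
      exact le_trans (totalDegree_pow _ _) (Nat.mul_le_mul_left _ (le_of_eq (td_base01 a ha)))
  · have hX : coeff (Finsupp.single 1 (a * k)) (X 1 : MvPolynomial (Fin 2) ℂ) = 0 := by
      rw [coeff_X']
      rw [if_neg]
      intro hcon
      have := DFunLike.congr_fun hcon 1
      simp at this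
      omega
    have h1 : coeff (Finsupp.single 1 (a * k)) (X 1 + (X 0 + X 1 ^ a) ^ k : MvPolynomial (Fin 2) ℂ) = 1 := by
      rw [coeff_add, hX, aux_coeff01, zero_add]
    have hmem : Finsupp.single (1 : Fin 2) (a * k) ∈ (X 1 + (X 0 + X 1 ^ a) ^ k : MvPolynomial (Fin 2) ℂ).support := by
      rw [mem_support_iff, h1]; norm_num
    have := le_totalDegree hmem
    rwa [Finsupp.sum_single_index rfl] at this

lemma td_big10 (a k : ℕ) (ha : 0 < a) (hk : 0 < k) (h2 : 2 ≤ a * k) :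
    (X 0 + (X 1 + X 0 ^ a) ^ k : MvPolynomial (Fin 2) ℂ).totalDegree = a * k := by
  apply le_antisymm
  · refine le_trans (totalDegree_add _ _) ?_
    simp only [totalDegree_X, max_le_iff]
    constructor
    · omega
    · rw [mul_comm a k]
      exact le_trans (totalDegree_pow _ _) (Nat.mul_le_mul_left _ (le_of_eq (td_base10 a ha)))
  · have hX : coeff (Finsupp.single 0 (a * k)) (X 0 : MvPolynomial (Fin 2) ℂ) = 0 := by
      rw [coeff_X']
      rw [if_neg]
      intro hcon
      have := DFunLike.congr_fun hcon 0
      simp at this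
      omega
    have h1 : coeff (Finsupp.single 0 (a * k)) (X 0 + (X 1 + X 0 ^ a) ^ k : MvPolynomial (Fin 2) ℂ) = 1 := by
      rw [coeff_add, hX, aux_coeff10, zero_add]
    have hmem : Finsupp.single (0 : Fin 2) (a * k) ∈ (X 0 + (X 1 + X 0 ^ a) ^ k : MvPolynomial (Fin 2) ℂ).support := by
      rw [mem_support_iff, h1]; norm_num
    have := le_totalDegree hmem
    rwa [Finsupp.sum_single_index rfl] at this

lemma aut01 (a k : ℕ) :
    IsPolyAut (X 0 + X 1 ^ a, X 1 + (X 0 + X 1 ^ a) ^ k) := by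
  refine ⟨(X 0 - (X 1 - X 0 ^ k) ^ a, X 1 - X 0 ^ k), ?_, ?_⟩ <;>
  · simp only [pcomp, Prod.mk.injEq, map_add, map_sub, map_pow, aeval_X,
      Matrix.cons_val_zero, Matrix.cons_val_one, Matrix.head_cons]
    constructor <;> ring

lemma aut10 (a k : ℕ) :
    IsPolyAut (X 0 + (X 1 + X 0 ^ a) ^ k, X 1 + X 0 ^ a) := by
  refine ⟨(X 0 - X 1 ^ k, X 1 - (X 0 - X 1 ^ k) ^ a), ?_, ?_⟩ <;>
  · simp only [pcomp, Prod.mk.injEq, map_add, map_sub, map_pow, aeval_X,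
      Matrix.cons_val_zero, Matrix.cons_val_one, Matrix.head_cons]
    constructor <;> ring

/-- For every pair of positive integers `(d1, d2)` with `d1 ∣ d2` or `d2 ∣ d1`, there is a
polynomial automorphism of ℂ² of bidegree `(d1, d2)`. -/
theorem stmt_2 (d1 d2 : ℕ) (hd1 : 0 < d1) (hd2 : 0 < d2) (hdvd : d1 ∣ d2 ∨ d2 ∣ d1) :
    ∃ F : PolyMap, IsPolyAut F ∧ F.1.totalDegree = d1 ∧ F.2.totalDegree = d2 := by
  by_cases htriv : d1 = 1 ∧ d2 = 1
  · obtain ⟨h1, h2⟩ := htriv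
    subst h1; subst h2
    refine ⟨(X 0, X 1), ⟨(X 0, X 1), ?_, ?_⟩, ?_, ?_⟩
    · simp [pcomp]
    · simp [pcomp]
    · exact totalDegree_X 0
    · exact totalDegree_X 1
  · rcases hdvd with ⟨k, hk⟩ | ⟨k, hk⟩
    · -- d2 = d1 * k
      have hpos : 0 < d1 * k := hk ▸ hd2
      have hkpos : 0 < k := Nat.pos_of_mul_pos_left (by rwa [mul_comm] at hpos)
      have h2 : 2 ≤ d1 * k := by
        by_contra h
        push_neg at h
        have h1 : d1 * k = 1 := by omega
        have e1 : d1 = 1 := Nat.eq_one_of_mul_eq_one_right h1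
        exact htriv ⟨e1, by omega⟩
      refine ⟨(X 0 + X 1 ^ d1, X 1 + (X 0 + X 1 ^ d1) ^ k), aut01 d1 k, ?_, ?_⟩
      · exact td_base01 d1 hd1
      · rw [hk]; exact td_big01 d1 k hd1 hkpos h2
    · -- d1 = d2 * k
      have hpos : 0 < d2 * k := hk ▸ hd1
      have hkpos : 0 < k := Nat.pos_of_mul_pos_left (by rwa [mul_comm] at hpos)
      have h2 : 2 ≤ d2 * k := by
        by_contra h
        push_neg at h
        have h1 : d2 * k = 1 := by omega
        have e1 : d2 = 1 := Nat.eq_one_of_mul_eq_one_right h1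
        exact htriv ⟨by omega, e1⟩
      refine ⟨(X 0 + (X 1 + X 0 ^ d2) ^ k, X 1 + X 0 ^ d2), aut10 d2 k, ?_, ?_⟩
      · rw [hk]; exact td_big10 d2 k hd2 hkpos h2
      · exact td_base10 d2 hd2
end

section
/- Let w = (w1, w2) ∈ ℕ₊² and let L be an affine automorphism of ℂ², i.e. L = (L1, L2) with deg L1 = deg L2 = 1 and L invertible. Then (deg_w L1, deg_w L2) ∈ {(w1, w2), (w2, w1), (max{w1,w2}, max{w1,w2})}. -/
open MvPolynomial

lemma support_mem (p : MvPolynomial (Fin 2) ℂ) (hp : p.totalDegree ≤ 1)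
    {α : Fin 2 →₀ ℕ} (hα : α ∈ p.support) :
    α = 0 ∨ α = Finsupp.single 0 1 ∨ α = Finsupp.single 1 1 := by
  have h := (MvPolynomial.le_totalDegree hα).trans hp
  rw [Finsupp.sum_fintype] at h
  · rw [Fin.sum_univ_two] at h
    have h0 : α 0 ≤ 1 := by omega
    have h1 : α 1 ≤ 1 := by omega
    have hext : ∀ β : Fin 2 →₀ ℕ, α 0 = β 0 → α 1 = β 1 → α = β := by
      intro β e0 e1
      ext i
      fin_cases i <;> assumption
    interval_cases e0 : α 0 <;> interval_cases e1 : α 1 <;>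
      [ (left; exact hext 0 (by simp [e0]) (by simp [e1]));
        (right; right; exact hext _ (by simp [e0, Finsupp.single_apply]) (by simp [e1, Finsupp.single_apply]));
        (right; left; exact hext _ (by simp [e0, Finsupp.single_apply]) (by simp [e1, Finsupp.single_apply]));
        omega ]
  · intro; rfl

lemma wdeg_eq (w1 w2 : ℕ) (p : MvPolynomial (Fin 2) ℂ) (hp : p.totalDegree ≤ 1) :
    wdeg w1 w2 p = (if coeff (Finsupp.single 0 1) p ≠ 0 then w1 else 0)
      ⊔ (if coeff (Finsupp.single 1 1) p ≠ 0 then w2 else 0) := by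
  apply le_antisymm
  · apply Finset.sup_le
    intro α hα
    rcases support_mem p hp hα with h | h | h <;> subst h
    · simp
    · rw [if_pos (mem_support_iff.mp hα)]
      simp [Finsupp.single_apply]
    · rw [if_pos (mem_support_iff.mp hα)] 
      simp [Finsupp.single_apply]
  · apply max_le
    · split_ifs with h
      · have : Finsupp.single (0 : Fin 2) 1 ∈ p.support := mem_support_iff.mpr h
        calc w1 = (Finsupp.single (0:Fin 2) 1) 0 * w1 + (Finsupp.single (0:Fin 2) 1) 1 * w2 := by
              simp [Finsupp.single_apply]
          _ ≤ _ := Finset.le_sup (f := fun α => α 0 * w1 + α 1 * w2) this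
      · exact Nat.zero_le _
    · split_ifs with h
      · have : Finsupp.single (1 : Fin 2) 1 ∈ p.support := mem_support_iff.mpr h
        calc w2 = (Finsupp.single (1:Fin 2) 1) 0 * w1 + (Finsupp.single (1:Fin 2) 1) 1 * w2 := by
              simp [Finsupp.single_apply]
          _ ≤ _ := Finset.le_sup (f := fun α => α 0 * w1 + α 1 * w2) this
      · exact Nat.zero_le _

lemma struct_eq (p : MvPolynomial (Fin 2) ℂ) (hp : p.totalDegree ≤ 1) :
    p = C (coeff 0 p) + C (coeff (Finsupp.single 0 1) p) * X 0
      + C (coeff (Finsupp.single 1 1) p) * X 1 := by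
  ext α
  simp only [coeff_add, coeff_C, coeff_C_mul, coeff_X']
  by_cases h0 : α = 0
  · subst h0
    simp [Finsupp.single_eq_zero, (by simp : ¬ (Finsupp.single (0:Fin 2) 1 = 0)),
      (by simp : ¬ (Finsupp.single (1:Fin 2) 1 = 0))]
  by_cases h1 : α = Finsupp.single 0 1
  · subst h1
    have : ¬ (Finsupp.single (1:Fin 2) 1 = Finsupp.single (0:Fin 2) 1) := by
      intro h; simpa using DFunLike.congr_fun h 0
    simp [h0, Ne.symm h0, this]
  by_cases h2 : α = Finsupp.single 1 1
  · subst h2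
    have : ¬ (Finsupp.single (0:Fin 2) 1 = Finsupp.single (1:Fin 2) 1) := by
      intro h; simpa using DFunLike.congr_fun h 0
    simp [h0, Ne.symm h0, this]
  · have : α ∉ p.support := by
      intro hm
      rcases support_mem p hp hm with h | h | h <;> tauto
    rw [notMem_support_iff.mp this]
    have e1 : ¬ ((Finsupp.single (0:Fin 2) 1) = α) := fun h => h1 h.symm
    have e2 : ¬ ((Finsupp.single (1:Fin 2) 1) = α) := fun h => h2 h.symm
    simp [Ne.symm h0, e1, e2]

lemma lin_ne (p : MvPolynomial (Fin 2) ℂ) (hp : p.totalDegree = 1) :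
    coeff (Finsupp.single 0 1) p ≠ 0 ∨ coeff (Finsupp.single 1 1) p ≠ 0 := by
  by_contra h
  push_neg at h
  have hd : p.totalDegree ≤ 0 := by
    apply Finset.sup_le
    intro α hα
    rcases support_mem p hp.le hα with h' | h' | h' <;> subst h'
    · simp
    · exact absurd (mem_support_iff.mp hα) (by simp [h.1])
    · exact absurd (mem_support_iff.mp hα) (by simp [h.2])
  omega

lemma aeval_comp_eq (G2 : MvPolynomial (Fin 2) ℂ) (L : PolyMap) (v : Fin 2 → ℂ) :
    aeval v (aeval ![L.1, L.2] G2) = aeval (fun i => aeval v (![L.1, L.2] i)) G2 :=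
  DFunLike.congr_fun (comp_aeval ![L.1, L.2] (aeval v)) G2

lemma no_common_kill (L : PolyMap) (G : PolyMap)
    (hG : pcomp G L = (X 0, X 1))
    (h1 : L.1.totalDegree ≤ 1) (h2 : L.2.totalDegree ≤ 1)
    (j : Fin 2)
    (hc1 : coeff (Finsupp.single j 1) L.1 = 0)
    (hc2 : coeff (Finsupp.single j 1) L.2 = 0) : False := by
  -- evaluate the identity component j of G ∘ L at two points differing in coordinate j
  have hkey : aeval ![L.1, L.2] (if j = 0 then G.1 else G.2) = X j := by
    rcases Fin.exists_fin_two.mp ⟨j, rfl⟩ with h | h <;> subst h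
    · simpa [pcomp] using congrArg Prod.fst hG
    · simpa [pcomp] using congrArg Prod.snd hG
  set q := (if j = 0 then G.1 else G.2) with hq
  set v : Fin 2 → ℂ := fun _ => 0 with hv
  set v' : Fin 2 → ℂ := fun i => if i = j then 1 else 0 with hv'
  have heval : ∀ p : MvPolynomial (Fin 2) ℂ, p.totalDegree ≤ 1 →
      coeff (Finsupp.single j 1) p = 0 → aeval v p = aeval v' p := by
    intro p hp hc
    rcases Fin.exists_fin_two.mp ⟨j, rfl⟩ with h | h <;> subst h <;>
      rw [struct_eq p hp, hc] <;> simp [hv, hv']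
  have hfun : (fun i => aeval v (![L.1, L.2] i)) = (fun i => aeval v' (![L.1, L.2] i)) := by
    funext i
    fin_cases i
    · simpa using heval L.1 h1 hc1
    · simpa using heval L.2 h2 hc2
  have e0 : aeval v (aeval ![L.1, L.2] q) = aeval v' (aeval ![L.1, L.2] q) := by
    rw [aeval_comp_eq, aeval_comp_eq, hfun]
  rw [hkey] at e0
  simp [hv, hv'] at e0

/-- The weighted bidegree of an affine automorphism of ℂ² is `(w1, w2)`, `(w2, w1)`
or `(max {w1, w2}, max {w1, w2})`. -/
theorem stmt_3 (w1 w2 : ℕ) (hw1 : 0 < w1) (hw2 : 0 < w2) (L : PolyMap) (hL : IsAffineAut L) :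
    (wdeg w1 w2 L.1, wdeg w1 w2 L.2) = (w1, w2) ∨
    (wdeg w1 w2 L.1, wdeg w1 w2 L.2) = (w2, w1) ∨
    (wdeg w1 w2 L.1, wdeg w1 w2 L.2) = (max w1 w2, max w1 w2) := by 
  obtain ⟨⟨G, hGL, hLG⟩, h1, h2⟩ := hL
  have hd1 := wdeg_eq w1 w2 L.1 h1.le
  have hd2 := wdeg_eq w1 w2 L.2 h2.le
  have hne1 := lin_ne L.1 h1
  have hne2 := lin_ne L.2 h2
  have hnc : ¬(coeff (Finsupp.single 1 1) L.1 = 0 ∧ coeff (Finsupp.single 1 1) L.2 = 0) :=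
    fun ⟨x, y⟩ => no_common_kill L G hLG h1.le h2.le 1 x y
  have hnb : ¬(coeff (Finsupp.single 0 1) L.1 = 0 ∧ coeff (Finsupp.single 0 1) L.2 = 0) :=
    fun ⟨x, y⟩ => no_common_kill L G hLG h1.le h2.le 0 x y
  rw [hd1, hd2]
  simp only [Prod.mk.injEq]
  by_cases hb1 : coeff (Finsupp.single 0 1) L.1 = 0 <;>
    by_cases hc1 : coeff (Finsupp.single 1 1) L.1 = 0 <;>
    by_cases hb2 : coeff (Finsupp.single 0 1) L.2 = 0 <;>
    by_cases hc2 : coeff (Finsupp.single 1 1) L.2 = 0 <;>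
    simp_all <;> omega
end

section
/- Let w = (w1, w2) ∈ ℕ₊², let L = (L1, L2) be an affine automorphism of ℂ² and let T(x,y) = (x, y + f(x)) with deg f > 1. Writing (k1, k2) for the weighted bidegree of T ∘ L: if (deg_w L1, deg_w L2) = (w1, w2) then (k1, k2) = (w1, max{w1·deg f, w2}); if (deg_w L1, deg_w L2) = (w2, w1) then (k1, k2) = (w2, max{w2·deg f, w1}); and if (deg_w L1, deg_w L2) = (w̃, w̃) with w̃ = max{w1, w2} then (k1, k2) = (w̃, w̃·deg f). -/
open MvPolynomial


namespace Stmt4Aux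

variable {w : Fin 2 → ℕ}

local notation "MvP" => MvPolynomial (Fin 2) ℂ

lemma weight_eval (w1 w2 : ℕ) (α : Fin 2 →₀ ℕ) :
    Finsupp.weight ![w1, w2] α = α 0 * w1 + α 1 * w2 := by
  rw [Finsupp.weight_apply, Finsupp.sum_fintype]
  · simp [Fin.sum_univ_two, mul_comm]
  · intro i; exact zero_smul ℕ _

lemma wdeg_eq (w1 w2 : ℕ) (p : MvP) :
    p.support.sup (fun α => α 0 * w1 + α 1 * w2) = weightedTotalDegree ![w1, w2] p := by
  unfold weightedTotalDegree
  apply Finset.sup_congr rfl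
  intro α _
  rw [weight_eval]

lemma W_def (p : MvP) :
    weightedTotalDegree w p = p.support.sup fun α => Finsupp.weight w α := rfl

lemma W_zero : weightedTotalDegree w (0 : MvP) = 0 := by
  simp [W_def]

lemma whc_ne_zero_le {m : ℕ} {p : MvP}
    (h : weightedHomogeneousComponent w m p ≠ 0) : m ≤ weightedTotalDegree w p := by
  rw [MvPolynomial.ne_zero_iff] at h
  obtain ⟨α, hα⟩ := h
  rw [coeff_weightedHomogeneousComponent] at hα
  by_cases hw : Finsupp.weight w α = m
  · rw [if_pos hw] at hα
    rw [← hw]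
    exact le_weightedTotalDegree w (mem_support_iff.2 hα)
  · rw [if_neg hw] at hα; exact absurd rfl hα

lemma whc_top_ne_zero {p : MvP} (hp : p ≠ 0) :
    weightedHomogeneousComponent w (weightedTotalDegree w p) p ≠ 0 := by
  obtain ⟨α, hα, hsup⟩ := Finset.exists_mem_eq_sup p.support
    (MvPolynomial.support_nonempty.2 hp) (fun α => Finsupp.weight w α)
  rw [MvPolynomial.ne_zero_iff]
  refine ⟨α, ?_⟩
  rw [coeff_weightedHomogeneousComponent, W_def, hsup, if_pos rfl]
  exact mem_support_iff.1 hα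

lemma W_add_le (p q : MvP) :
    weightedTotalDegree w (p + q) ≤ max (weightedTotalDegree w p) (weightedTotalDegree w q) := by
  rw [W_def]
  apply Finset.sup_le
  intro α hα
  rcases Finset.mem_union.1 (MvPolynomial.support_add hα) with h | h
  · exact le_max_of_le_left (le_weightedTotalDegree w h)
  · exact le_max_of_le_right (le_weightedTotalDegree w h)

lemma W_mul_le (p q : MvP) :
    weightedTotalDegree w (p * q) ≤ weightedTotalDegree w p + weightedTotalDegree w q := by
  rw [W_def]
  apply Finset.sup_le
  intro α hα
  obtain ⟨β, hβ, γ, hγ, rfl⟩ := Finset.mem_add.1 (MvPolynomial.support_mul p q hα)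
  rw [map_add]
  exact add_le_add (le_weightedTotalDegree w hβ) (le_weightedTotalDegree w hγ)

lemma W_pow_le (p : MvP) (k : ℕ) :
    weightedTotalDegree w (p ^ k) ≤ k * weightedTotalDegree w p := by
  induction k with
  | zero =>
      rw [pow_zero, Nat.zero_mul, ← C_1, ← MvPolynomial.monomial_zero']
      rw [W_def]
      apply Finset.sup_le
      intro α hα
      have := MvPolynomial.support_monomial_subset hα
      rw [Finset.mem_singleton] at this
      simp [this]
  | succ k ih =>
      rw [pow_succ]
      calc weightedTotalDegree w (p ^ k * p)
          ≤ weightedTotalDegree w (p ^ k) + weightedTotalDegree w p := W_mul_le _ _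
        _ ≤ k * weightedTotalDegree w p + weightedTotalDegree w p := by
            exact Nat.add_le_add_right ih _
        _ = (k + 1) * weightedTotalDegree w p := by ring

lemma W_smul_le (c : ℂ) (p : MvP) :
    weightedTotalDegree w (c • p) ≤ weightedTotalDegree w p := by
  rw [W_def, W_def]
  apply Finset.sup_le
  intro α hα
  exact Finset.le_sup (MvPolynomial.support_smul hα)

lemma W_sum_le {ι : Type*} (s : Finset ι) (h : ι → MvP) (b : ℕ)
    (hb : ∀ i ∈ s, weightedTotalDegree w (h i) ≤ b) :
    weightedTotalDegree w (∑ i ∈ s, h i) ≤ b := by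
  classical
  induction s using Finset.induction_on with
  | empty => simp [W_zero]
  | insert _ _ hx ih =>
      rename_i a s
      rw [Finset.sum_insert hx]
      refine le_trans (W_add_le _ _) (max_le (hb a (Finset.mem_insert_self a s)) ?_)
      exact ih fun i hi => hb i (Finset.mem_insert_of_mem hi)

lemma W_aeval_le (p : MvP) (f : Polynomial ℂ) :
    weightedTotalDegree w (Polynomial.aeval p f) ≤ f.natDegree * weightedTotalDegree w p := by
  rw [Polynomial.aeval_eq_sum_range]
  apply W_sum_le
  intro i hi
  refine le_trans (W_smul_le _ _) (le_trans (W_pow_le p i) ?_)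
  exact Nat.mul_le_mul_right _ (Nat.lt_succ_iff.1 (Finset.mem_range.1 hi))

lemma whc_mul_top {p q : MvP} {mp mq : ℕ}
    (hp : weightedTotalDegree w p ≤ mp) (hq : weightedTotalDegree w q ≤ mq) :
    weightedHomogeneousComponent w (mp + mq) (p * q) =
      weightedHomogeneousComponent w mp p * weightedHomogeneousComponent w mq q := by
  ext α
  rw [coeff_weightedHomogeneousComponent, MvPolynomial.coeff_mul, MvPolynomial.coeff_mul]
  split_ifs with h
  · apply Finset.sum_congr rfl
    rintro ⟨β, γ⟩ hm
    rw [Finset.HasAntidiagonal.mem_antidiagonal] at hm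
    rw [coeff_weightedHomogeneousComponent, coeff_weightedHomogeneousComponent]
    by_cases hb : coeff β p = 0
    · simp [hb]
    by_cases hc : coeff γ q = 0
    · simp [hc]
    have h1 : Finsupp.weight w β ≤ mp :=
      le_trans (le_weightedTotalDegree w (mem_support_iff.2 hb)) hp
    have h2 : Finsupp.weight w γ ≤ mq :=
      le_trans (le_weightedTotalDegree w (mem_support_iff.2 hc)) hq
    have hsum : Finsupp.weight w β + Finsupp.weight w γ = mp + mq := by
      rw [← map_add, hm, h]
    have e1 : Finsupp.weight w β = mp := by omega
    have e2 : Finsupp.weight w γ = mq := by omega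
    rw [if_pos e1, if_pos e2]
  · symm
    apply Finset.sum_eq_zero
    rintro ⟨β, γ⟩ hm
    rw [Finset.HasAntidiagonal.mem_antidiagonal] at hm
    rw [coeff_weightedHomogeneousComponent, coeff_weightedHomogeneousComponent]
    split_ifs with e1 e2
    · exact absurd (by rw [map_add, e1, e2] : Finsupp.weight w (β + γ) = mp + mq)
        (by rw [hm]; exact h)
    · exact mul_zero _
    · exact zero_mul _
    · exact zero_mul _

lemma whc_pow_top {p : MvP} {m : ℕ} (hp : weightedTotalDegree w p ≤ m) (k : ℕ) :
    weightedHomogeneousComponent w (k * m) (p ^ k) =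
      (weightedHomogeneousComponent w m p) ^ k := by
  induction k with
  | zero =>
      simp only [Nat.zero_mul, pow_zero]
      have h1 : IsWeightedHomogeneous w (1 : MvP) 0 := isWeightedHomogeneous_one ℂ w
      exact h1.weightedHomogeneousComponent_same
  | succ k ih =>
      have hk : weightedTotalDegree w (p ^ k) ≤ k * m :=
        le_trans (W_pow_le p k) (Nat.mul_le_mul_left _ hp)
      rw [pow_succ, pow_succ, ← ih, show (k + 1) * m = k * m + m by ring, whc_mul_top hk hp]

lemma whc_eq_zero {m : ℕ} {p : MvP} (h : weightedTotalDegree w p < m) :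
    weightedHomogeneousComponent w m p = 0 := by
  by_contra hne
  exact absurd (whc_ne_zero_le hne) (by omega)

lemma W_add_right {p q : MvP} (h : weightedTotalDegree w p < weightedTotalDegree w q) :
    weightedTotalDegree w (p + q) = weightedTotalDegree w q := by
  have hq : q ≠ 0 := by
    rintro rfl
    rw [W_zero] at h
    omega
  refine le_antisymm (le_trans (W_add_le p q) (max_le h.le le_rfl)) ?_
  apply whc_ne_zero_le
  rw [map_add, whc_eq_zero h, zero_add]
  exact whc_top_ne_zero hq


lemma finsupp2_ext {α β : Fin 2 →₀ ℕ} (h0 : α 0 = β 0) (h1 : α 1 = β 1) : α = β := by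
  ext i
  fin_cases i
  · exact h0
  · exact h1

lemma supp_affine {p : MvP} (hp : p.totalDegree ≤ 1) {α : Fin 2 →₀ ℕ} (hα : α ∈ p.support) :
    α = 0 ∨ α = Finsupp.single 0 1 ∨ α = Finsupp.single 1 1 := by
  have hd : α 0 + α 1 ≤ 1 := by
    have h1 := MvPolynomial.le_totalDegree hα
    have hs : (α.sum fun _ e => e) = α 0 + α 1 := by
      rw [Finsupp.sum_fintype]
      · exact Fin.sum_univ_two _
      · intro i; rfl
    omega
  by_cases ha : α 0 = 0
  · by_cases hb : α 1 = 0
    · exact Or.inl (finsupp2_ext (by simp [ha]) (by simp [hb]))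
    · have hb1 : α 1 = 1 := by omega
      exact Or.inr (Or.inr (finsupp2_ext (by simp [ha, Finsupp.single_apply])
        (by simp [hb1, Finsupp.single_apply])))
  · have ha1 : α 0 = 1 := by omega
    have hb0 : α 1 = 0 := by omega
    exact Or.inr (Or.inl (finsupp2_ext (by simp [ha1, Finsupp.single_apply])
      (by simp [hb0, Finsupp.single_apply])))

lemma e0_ne_zero : (Finsupp.single 0 1 : Fin 2 →₀ ℕ) ≠ 0 := by
  intro h
  simpa using DFunLike.congr_fun h 0

lemma e1_ne_zero : (Finsupp.single 1 1 : Fin 2 →₀ ℕ) ≠ 0 := by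
  intro h
  simpa using DFunLike.congr_fun h 1

lemma e0_ne_e1 : (Finsupp.single 0 1 : Fin 2 →₀ ℕ) ≠ Finsupp.single 1 1 := by
  intro h
  simpa using DFunLike.congr_fun h 0

lemma rep_affine {p : MvP} (hp : p.totalDegree ≤ 1) :
    p = monomial 0 (coeff 0 p) + monomial (Finsupp.single 0 1) (coeff (Finsupp.single 0 1) p)
        + monomial (Finsupp.single 1 1) (coeff (Finsupp.single 1 1) p) := by
  ext α
  rw [coeff_add, coeff_add, coeff_monomial, coeff_monomial, coeff_monomial]
  by_cases hs : α ∈ p.support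
  · rcases supp_affine hp hs with rfl | rfl | rfl
    · simp [e0_ne_zero, e1_ne_zero]
    · simp [Ne.symm e0_ne_zero, e0_ne_e1, Ne.symm e0_ne_e1]
    · simp [Ne.symm e1_ne_zero, e0_ne_e1]
  · have hc : coeff α p = 0 := by rwa [mem_support_iff, not_not] at hs
    rw [hc]
    have t1 : (if (0 : Fin 2 →₀ ℕ) = α then coeff 0 p else 0) = 0 := by
      split_ifs with h
      · rw [h, hc]
      · rfl
    have t2 : (if Finsupp.single 0 1 = α then coeff (Finsupp.single 0 1) p else 0) = 0 := by
      split_ifs with h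
      · rw [h, hc]
      · rfl
    have t3 : (if Finsupp.single 1 1 = α then coeff (Finsupp.single 1 1) p else 0) = 0 := by
      split_ifs with h
      · rw [h, hc]
      · rfl
    rw [t1, t2, t3, add_zero, add_zero]

lemma whc_monomial (m : ℕ) (β : Fin 2 →₀ ℕ) (c : ℂ) :
    weightedHomogeneousComponent w m (monomial β c) =
      if Finsupp.weight w β = m then monomial β c else 0 := by
  ext α
  rw [coeff_weightedHomogeneousComponent]
  split_ifs with h1 h2 h2
  · rfl
  · rw [coeff_zero, coeff_monomial, if_neg]
    rintro rfl
    exact h2 h1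
  · rw [coeff_monomial, if_neg]
    rintro rfl
    exact h1 h2
  · rw [coeff_zero]

lemma whc_affine (w1 w2 : ℕ) {p : MvP} (hp : p.totalDegree ≤ 1) (m : ℕ) :
    weightedHomogeneousComponent ![w1, w2] m p =
      (if 0 = m then monomial 0 (coeff 0 p) else 0)
      + (if w1 = m then monomial (Finsupp.single 0 1) (coeff (Finsupp.single 0 1) p) else 0)
      + (if w2 = m then monomial (Finsupp.single 1 1) (coeff (Finsupp.single 1 1) p) else 0) := by
  have hw0 : Finsupp.weight ![w1, w2] (0 : Fin 2 →₀ ℕ) = 0 := map_zero _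
  have hw1 : Finsupp.weight ![w1, w2] (Finsupp.single 0 1) = w1 := by
    rw [weight_eval]; simp [Finsupp.single_apply]
  have hw2 : Finsupp.weight ![w1, w2] (Finsupp.single 1 1) = w2 := by
    rw [weight_eval]; simp [Finsupp.single_apply]
  conv_lhs => rw [rep_affine hp]
  rw [map_add, map_add, whc_monomial, whc_monomial, whc_monomial, hw0, hw1, hw2]

lemma single0n_coeff_zero {p : MvP} (hp : p.totalDegree ≤ 1) {n : ℕ} (hn : 1 < n) :
    coeff (Finsupp.single 0 n) p = 0 := by
  by_contra h
  rcases supp_affine hp (mem_support_iff.2 h) with h' | h' | h' <;>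
    · have := DFunLike.congr_fun h' 0
      simp [Finsupp.single_apply] at this
      omega

lemma single1n_coeff_zero {p : MvP} (hp : p.totalDegree ≤ 1) {n : ℕ} (hn : 1 < n) :
    coeff (Finsupp.single 1 n) p = 0 := by
  by_contra h
  rcases supp_affine hp (mem_support_iff.2 h) with h' | h' | h' <;>
    · have := DFunLike.congr_fun h' 1
      simp [Finsupp.single_apply] at this
      omega

lemma whc_aeval_top {L1 : MvP} {f : Polynomial ℂ} (hm : 0 < weightedTotalDegree w L1)
    (hn : 0 < f.natDegree) :
    weightedHomogeneousComponent w (f.natDegree * weightedTotalDegree w L1)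
        (Polynomial.aeval L1 f)
      = C f.leadingCoeff *
        (weightedHomogeneousComponent w (weightedTotalDegree w L1) L1) ^ f.natDegree := by
  have hdec : (Polynomial.aeval L1) f =
      Polynomial.aeval L1 f.eraseLead + C f.leadingCoeff * L1 ^ f.natDegree := by
    conv_lhs => rw [← f.eraseLead_add_C_mul_X_pow]
    rw [map_add, map_mul, map_pow, Polynomial.aeval_C, Polynomial.aeval_X,
      MvPolynomial.algebraMap_eq]
  rw [hdec, map_add]
  have h1 : weightedTotalDegree w (Polynomial.aeval L1 f.eraseLead)
      < f.natDegree * weightedTotalDegree w L1 := by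
    refine lt_of_le_of_lt (W_aeval_le _ _) ?_
    have h2 : f.eraseLead.natDegree * weightedTotalDegree w L1
        ≤ (f.natDegree - 1) * weightedTotalDegree w L1 :=
      Nat.mul_le_mul_right _ f.eraseLead_natDegree_le
    have h3 : (f.natDegree - 1) * weightedTotalDegree w L1
        < f.natDegree * weightedTotalDegree w L1 :=
      (Nat.mul_lt_mul_right hm).2 (by omega)
    omega
  rw [whc_eq_zero h1, zero_add, weightedHomogeneousComponent_C_mul, whc_pow_top le_rfl]

lemma W_aeval_eq {L1 : MvP} {f : Polynomial ℂ} (hm : 0 < weightedTotalDegree w L1)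
    (hn : 0 < f.natDegree) :
    weightedTotalDegree w (Polynomial.aeval L1 f)
      = f.natDegree * weightedTotalDegree w L1 := by
  have hL1 : L1 ≠ 0 := by
    rintro rfl
    rw [W_zero] at hm
    omega
  have hf : f ≠ 0 := fun h => by simp [h] at hn
  refine le_antisymm (W_aeval_le _ _) (whc_ne_zero_le ?_)
  rw [whc_aeval_top hm hn]
  exact mul_ne_zero (by simpa using Polynomial.leadingCoeff_ne_zero.2 hf)
    (pow_ne_zero _ (whc_top_ne_zero hL1))

lemma case_lt {L1 L2 : MvP} {f : Polynomial ℂ}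
    (h : weightedTotalDegree w L2 < f.natDegree * weightedTotalDegree w L1)
    (hn : 0 < f.natDegree) :
    weightedTotalDegree w (L2 + Polynomial.aeval L1 f)
      = f.natDegree * weightedTotalDegree w L1 := by
  have hm : 0 < weightedTotalDegree w L1 := by
    rcases Nat.eq_zero_or_pos (weightedTotalDegree w L1) with h0 | h0
    · rw [h0, Nat.mul_zero] at h
      omega
    · exact h0
  rw [W_add_right (h.trans_eq (W_aeval_eq hm hn).symm), W_aeval_eq hm hn]

lemma case_gt {L1 L2 : MvP} {f : Polynomial ℂ}
    (h : f.natDegree * weightedTotalDegree w L1 < weightedTotalDegree w L2) :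
    weightedTotalDegree w (L2 + Polynomial.aeval L1 f) = weightedTotalDegree w L2 := by
  rw [add_comm]
  exact W_add_right (lt_of_le_of_lt (W_aeval_le _ _) h)


lemma case_tie1 (w1 w2 : ℕ) (hw1 : 0 < w1) {L1 L2 : MvP} (hL1 : L1.totalDegree ≤ 1)
    (hL2 : L2.totalDegree ≤ 1) {f : Polynomial ℂ} (hn : 1 < f.natDegree)
    (h1 : weightedTotalDegree ![w1, w2] L1 = w1)
    (h2 : weightedTotalDegree ![w1, w2] L2 ≤ w2)
    (heq : w2 = f.natDegree * w1) :
    weightedTotalDegree ![w1, w2] (L2 + Polynomial.aeval L1 f) = w2 := by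
  subst heq
  have hw12 : w1 < f.natDegree * w1 := by
    have : 2 * w1 ≤ f.natDegree * w1 := Nat.mul_le_mul_right _ (by omega)
    omega
  have hL1ne : L1 ≠ 0 := by
    rintro rfl
    rw [W_zero] at h1
    omega
  have hf : f ≠ 0 := fun h => by simp [h] at hn
  have hm : 0 < weightedTotalDegree ![w1, f.natDegree * w1] L1 := by rw [h1]; exact hw1
  have htop := whc_aeval_top (w := ![w1, f.natDegree * w1]) (f := f) hm (by omega)
  rw [h1] at htop
  have hwhcL1 : weightedHomogeneousComponent ![w1, f.natDegree * w1] w1 L1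
      = monomial (Finsupp.single 0 1) (coeff (Finsupp.single 0 1) L1) := by
    rw [whc_affine w1 (f.natDegree * w1) hL1 w1, if_neg (Nat.ne_of_lt hw1),
      if_pos rfl, if_neg (Nat.ne_of_gt hw12)]
    simp
  have ha : coeff (Finsupp.single 0 1) L1 ≠ 0 := by
    intro h0
    have hne := whc_top_ne_zero (w := ![w1, f.natDegree * w1]) hL1ne
    rw [h1, hwhcL1, h0] at hne
    exact hne monomial_zero
  have hne : weightedHomogeneousComponent ![w1, f.natDegree * w1] (f.natDegree * w1)
      (L2 + Polynomial.aeval L1 f) ≠ 0 := by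
    rw [map_add]
    have e2 : weightedHomogeneousComponent ![w1, f.natDegree * w1] (f.natDegree * w1)
          (Polynomial.aeval L1 f)
        = monomial (Finsupp.single 0 f.natDegree)
            (f.leadingCoeff * coeff (Finsupp.single 0 1) L1 ^ f.natDegree) := by
      rw [htop, hwhcL1, monomial_pow, C_mul_monomial]
      congr 1
      rw [Finsupp.smul_single]
      norm_num
    rw [e2]
    intro hzero
    have hc := congrArg (coeff (Finsupp.single 0 f.natDegree)) hzero
    rw [coeff_add, coeff_zero, coeff_weightedHomogeneousComponent, coeff_monomial,
      if_pos rfl, single0n_coeff_zero hL2 hn] at hc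
    rw [ite_self, zero_add] at hc
    exact (mul_ne_zero (Polynomial.leadingCoeff_ne_zero.2 hf) (pow_ne_zero _ ha)) hc
  have hge := whc_ne_zero_le hne
  have hle : weightedTotalDegree ![w1, f.natDegree * w1] (L2 + Polynomial.aeval L1 f)
      ≤ f.natDegree * w1 := by
    refine le_trans (W_add_le _ _) (max_le h2 ?_)
    rw [W_aeval_eq hm (by omega), h1]
  omega

lemma case_tie2 (w1 w2 : ℕ) (hw2 : 0 < w2) {L1 L2 : MvP} (hL1 : L1.totalDegree ≤ 1)
    (hL2 : L2.totalDegree ≤ 1) {f : Polynomial ℂ} (hn : 1 < f.natDegree)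
    (h1 : weightedTotalDegree ![w1, w2] L1 = w2)
    (h2 : weightedTotalDegree ![w1, w2] L2 ≤ w1)
    (heq : w1 = f.natDegree * w2) :
    weightedTotalDegree ![w1, w2] (L2 + Polynomial.aeval L1 f) = w1 := by
  subst heq
  have hw12 : w2 < f.natDegree * w2 := by
    have : 2 * w2 ≤ f.natDegree * w2 := Nat.mul_le_mul_right _ (by omega)
    omega
  have hL1ne : L1 ≠ 0 := by
    rintro rfl
    rw [W_zero] at h1
    omega
  have hf : f ≠ 0 := fun h => by simp [h] at hn
  have hm : 0 < weightedTotalDegree ![f.natDegree * w2, w2] L1 := by rw [h1]; exact hw2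
  have htop := whc_aeval_top (w := ![f.natDegree * w2, w2]) (f := f) hm (by omega)
  rw [h1] at htop
  have hwhcL1 : weightedHomogeneousComponent ![f.natDegree * w2, w2] w2 L1
      = monomial (Finsupp.single 1 1) (coeff (Finsupp.single 1 1) L1) := by
    rw [whc_affine (f.natDegree * w2) w2 hL1 w2, if_neg (Nat.ne_of_lt hw2),
      if_neg (Nat.ne_of_gt hw12), if_pos rfl]
    simp
  have ha : coeff (Finsupp.single 1 1) L1 ≠ 0 := by
    intro h0
    have hne := whc_top_ne_zero (w := ![f.natDegree * w2, w2]) hL1ne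
    rw [h1, hwhcL1, h0] at hne
    exact hne monomial_zero
  have hne : weightedHomogeneousComponent ![f.natDegree * w2, w2] (f.natDegree * w2)
      (L2 + Polynomial.aeval L1 f) ≠ 0 := by
    rw [map_add]
    have e2 : weightedHomogeneousComponent ![f.natDegree * w2, w2] (f.natDegree * w2)
          (Polynomial.aeval L1 f)
        = monomial (Finsupp.single 1 f.natDegree)
            (f.leadingCoeff * coeff (Finsupp.single 1 1) L1 ^ f.natDegree) := by
      rw [htop, hwhcL1, monomial_pow, C_mul_monomial]
      congr 1
      rw [Finsupp.smul_single]
      norm_num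
    rw [e2]
    intro hzero
    have hc := congrArg (coeff (Finsupp.single 1 f.natDegree)) hzero
    rw [coeff_add, coeff_zero, coeff_weightedHomogeneousComponent, coeff_monomial,
      if_pos rfl, single1n_coeff_zero hL2 hn] at hc
    rw [ite_self, zero_add] at hc
    exact (mul_ne_zero (Polynomial.leadingCoeff_ne_zero.2 hf) (pow_ne_zero _ ha)) hc
  have hge := whc_ne_zero_le hne
  have hle : weightedTotalDegree ![f.natDegree * w2, w2] (L2 + Polynomial.aeval L1 f)
      ≤ f.natDegree * w2 := by
    refine le_trans (W_add_le _ _) (max_le h2 ?_)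
    rw [W_aeval_eq hm (by omega), h1]
  omega

end Stmt4Aux


lemma wdeg_eq' (w1 w2 : ℕ) (p : MvPolynomial (Fin 2) ℂ) :
    wdeg w1 w2 p = weightedTotalDegree ![w1, w2] p := Stmt4Aux.wdeg_eq w1 w2 p

/-- Weighted bidegree of `T ∘ L` for `L` affine and `T(x,y) = (x, y + f(x))`, `deg f > 1`,
in terms of the weighted bidegree of `L`. -/
theorem stmt_4 (w1 w2 : ℕ) (hw1 : 0 < w1) (hw2 : 0 < w2) (L : PolyMap) (hL : IsAffineAut L)
    (f : Polynomial ℂ) (hf : 1 < f.natDegree)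
    (k1 k2 : ℕ) (hk1 : k1 = wdeg w1 w2 (pcomp (lowerT f) L).1)
    (hk2 : k2 = wdeg w1 w2 (pcomp (lowerT f) L).2) :
    ((wdeg w1 w2 L.1, wdeg w1 w2 L.2) = (w1, w2) →
      (k1, k2) = (w1, max (w1 * f.natDegree) w2)) ∧
    ((wdeg w1 w2 L.1, wdeg w1 w2 L.2) = (w2, w1) →
      (k1, k2) = (w2, max (w2 * f.natDegree) w1)) ∧
    ((wdeg w1 w2 L.1, wdeg w1 w2 L.2) = (max w1 w2, max w1 w2) →
      (k1, k2) = (max w1 w2, max w1 w2 * f.natDegree)) := by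
  obtain ⟨-, hd1, hd2⟩ := hL
  have hL1 : L.1.totalDegree ≤ 1 := le_of_eq hd1
  have hL2 : L.2.totalDegree ≤ 1 := le_of_eq hd2
  have hn1 : 0 < f.natDegree := by omega
  have hP1 : (pcomp (lowerT f) L).1 = L.1 := by
    simp [pcomp, lowerT]
  have hP2 : (pcomp (lowerT f) L).2 = L.2 + Polynomial.aeval L.1 f := by
    show (MvPolynomial.aeval ![L.1, L.2])
      (MvPolynomial.X 1 + Polynomial.aeval (MvPolynomial.X 0) f) = _
    rw [map_add, MvPolynomial.aeval_X, ← Polynomial.aeval_algHom_apply, MvPolynomial.aeval_X]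
    simp
  rw [hP1, wdeg_eq'] at hk1
  rw [hP2, wdeg_eq'] at hk2
  refine ⟨?_, ?_, ?_⟩ <;> intro h <;> rw [Prod.mk.injEq, wdeg_eq', wdeg_eq'] at h <;>
    obtain ⟨h1, h2⟩ := h <;> rw [Prod.mk.injEq]
  · -- case (w1, w2)
    refine ⟨by rw [hk1, h1], ?_⟩
    rcases lt_trichotomy w2 (f.natDegree * w1) with hlt | heq | hgt
    · have hv := Stmt4Aux.case_lt (w := ![w1, w2]) (L1 := L.1) (L2 := L.2) (f := f)
        (by rw [h1, h2]; exact hlt) hn1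
      rw [h1] at hv
      rw [hk2, hv, mul_comm f.natDegree w1]
      exact (max_eq_left (by rw [mul_comm]; exact le_of_lt hlt)).symm
    · rw [hk2, Stmt4Aux.case_tie1 w1 w2 hw1 hL1 hL2 hf h1 (le_of_eq h2) heq]
      exact (max_eq_right (le_of_eq ((mul_comm w1 f.natDegree).trans heq.symm))).symm
    · have hv := Stmt4Aux.case_gt (w := ![w1, w2]) (L1 := L.1) (L2 := L.2) (f := f)
        (by rw [h1, h2]; exact hgt)
      rw [h2] at hv
      rw [hk2, hv]
      exact (max_eq_right (by rw [mul_comm]; exact le_of_lt hgt)).symm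
  · -- case (w2, w1)
    refine ⟨by rw [hk1, h1], ?_⟩
    rcases lt_trichotomy w1 (f.natDegree * w2) with hlt | heq | hgt
    · have hv := Stmt4Aux.case_lt (w := ![w1, w2]) (L1 := L.1) (L2 := L.2) (f := f)
        (by rw [h1, h2]; exact hlt) hn1
      rw [h1] at hv
      rw [hk2, hv, mul_comm f.natDegree w2]
      exact (max_eq_left (by rw [mul_comm]; exact le_of_lt hlt)).symm
    · rw [hk2, Stmt4Aux.case_tie2 w1 w2 hw2 hL1 hL2 hf h1 (le_of_eq h2) heq]
      exact (max_eq_right (le_of_eq ((mul_comm w2 f.natDegree).trans heq.symm))).symm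
    · have hv := Stmt4Aux.case_gt (w := ![w1, w2]) (L1 := L.1) (L2 := L.2) (f := f)
        (by rw [h1, h2]; exact hgt)
      rw [h2] at hv
      rw [hk2, hv]
      exact (max_eq_right (by rw [mul_comm]; exact le_of_lt hgt)).symm
  · -- case (max, max)
    refine ⟨by rw [hk1, h1], ?_⟩
    have hlt : max w1 w2 < f.natDegree * max w1 w2 := by
      have h2le : 2 * max w1 w2 ≤ f.natDegree * max w1 w2 :=
        Nat.mul_le_mul_right _ (by omega)
      omega
    have hv := Stmt4Aux.case_lt (w := ![w1, w2]) (L1 := L.1) (L2 := L.2) (f := f)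
      (by rw [h1, h2]; exact hlt) hn1
    rw [h1] at hv
    rw [hk2, hv, mul_comm]
end

section
/- Let w = (w1, w2) ∈ ℕ₊². If F = (F1, F2) is a polynomial automorphism of ℂ² which is a composition L2 ∘ T ∘ L1 of two affine automorphisms L1, L2 and one triangular map T(x,y) = (x, y + f(x)) with deg f > 1, then (deg_w F1, deg_w F2) belongs to the union of: {(w1, k·w1), (k·w1, w1), (k·w1, k·w1) : k ∈ ℕ₊, k·w1 ≥ w2}, {(w2, k·w2), (k·w2, w2), (k·w2, k·w2) : k ∈ ℕ₊, k·w2 ≥ w1}, and {(w1, w2), (w2, w1), (w̃, w̃)} where w̃ = max{w1, w2}. -/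
open MvPolynomial

variable {w1 w2 : ℕ}

lemma wdeg_le {p : MvPolynomial (Fin 2) ℂ} {d : ℕ}
    (h : ∀ m ∈ p.support, m 0 * w1 + m 1 * w2 ≤ d) : wdeg w1 w2 p ≤ d :=
  Finset.sup_le h

lemma le_wdeg {p : MvPolynomial (Fin 2) ℂ} {m : Fin 2 →₀ ℕ} (h : coeff m p ≠ 0) :
    m 0 * w1 + m 1 * w2 ≤ wdeg w1 w2 p :=
  Finset.le_sup (f := fun α => α 0 * w1 + α 1 * w2) (mem_support_iff.2 h)

lemma wdeg_C_le (c : ℂ) : wdeg w1 w2 (C c) ≤ 0 := by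
  apply wdeg_le
  intro m hm
  have := mem_support_iff.1 hm
  rw [coeff_C] at this
  rcases eq_or_ne m 0 with rfl | h
  · simp
  · simp [Ne.symm h] at this

lemma wdeg_add_le (p q : MvPolynomial (Fin 2) ℂ) :
    wdeg w1 w2 (p + q) ≤ max (wdeg w1 w2 p) (wdeg w1 w2 q) := by
  apply wdeg_le
  intro m hm
  rcases Finset.mem_union.1 (MvPolynomial.support_add hm) with h | h
  · exact le_max_of_le_left (Finset.le_sup (f := fun α => α 0 * w1 + α 1 * w2) h)
  · exact le_max_of_le_right (Finset.le_sup (f := fun α => α 0 * w1 + α 1 * w2) h)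

lemma wdeg_mul_le (p q : MvPolynomial (Fin 2) ℂ) :
    wdeg w1 w2 (p * q) ≤ wdeg w1 w2 p + wdeg w1 w2 q := by
  classical
  apply wdeg_le
  intro m hm
  obtain ⟨a, ha, b, hb, rfl⟩ := Finset.mem_add.1 (MvPolynomial.support_mul p q hm)
  have : (a + b) 0 * w1 + (a + b) 1 * w2 = (a 0 * w1 + a 1 * w2) + (b 0 * w1 + b 1 * w2) := by
    simp [Finsupp.add_apply]; ring
  rw [this]
  exact Nat.add_le_add (Finset.le_sup (f := fun α => α 0 * w1 + α 1 * w2) ha)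
    (Finset.le_sup (f := fun α => α 0 * w1 + α 1 * w2) hb)

lemma wdeg_pow_le (p : MvPolynomial (Fin 2) ℂ) (k : ℕ) :
    wdeg w1 w2 (p ^ k) ≤ k * wdeg w1 w2 p := by
  induction k with
  | zero => simpa using wdeg_C_le 1
  | succ k ih =>
      calc wdeg w1 w2 (p ^ (k+1)) ≤ wdeg w1 w2 (p ^ k) + wdeg w1 w2 p := by
            rw [pow_succ]; exact wdeg_mul_le _ _
        _ ≤ k * wdeg w1 w2 p + wdeg w1 w2 p := by omega
        _ = (k+1) * wdeg w1 w2 p := by ring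

lemma wdeg_X0_le : wdeg w1 w2 (X 0 : MvPolynomial (Fin 2) ℂ) ≤ w1 := by
  apply wdeg_le
  intro m hm
  have := mem_support_iff.1 hm
  rw [coeff_X'] at this
  have hm' : Finsupp.single (0 : Fin 2) 1 = m := by by_contra h; simp [h] at this
  subst hm'
  simp [Finsupp.single_apply]

lemma wdeg_X1_le : wdeg w1 w2 (X 1 : MvPolynomial (Fin 2) ℂ) ≤ w2 := by
  apply wdeg_le
  intro m hm
  have := mem_support_iff.1 hm
  rw [coeff_X'] at this
  have hm' : Finsupp.single (1 : Fin 2) 1 = m := by by_contra h; simp [h] at this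
  subst hm'
  simp [Finsupp.single_apply]

lemma wdeg_sum_le {s : Finset ℕ} {g : ℕ → MvPolynomial (Fin 2) ℂ} {d : ℕ}
    (h : ∀ k ∈ s, wdeg w1 w2 (g k) ≤ d) : wdeg w1 w2 (∑ k ∈ s, g k) ≤ d := by
  classical
  induction s using Finset.induction with
  | empty => simp [wdeg]
  | insert _ _ hx ih =>
      rename_i a s'
      rw [Finset.sum_insert hx]
      refine le_trans (wdeg_add_le _ _) (max_le (h a (by simp)) (ih fun k hk => h k (by simp [hk])))

lemma wdeg_aeval_le (u : MvPolynomial (Fin 2) ℂ) (f : Polynomial ℂ) :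
    wdeg w1 w2 (Polynomial.aeval u f) ≤ f.natDegree * wdeg w1 w2 u := by
  rw [Polynomial.aeval_eq_sum_range]
  apply wdeg_sum_le
  intro k hk
  have hk' : k ≤ f.natDegree := by
    simp [Finset.mem_range] at hk; omega
  calc wdeg w1 w2 (f.coeff k • u ^ k) ≤ wdeg w1 w2 (u ^ k) := by
        rw [smul_eq_C_mul]
        exact le_trans (wdeg_mul_le _ _) (by have := wdeg_C_le (w1 := w1) (w2 := w2) (f.coeff k); omega)
    _ ≤ k * wdeg w1 w2 u := wdeg_pow_le u k
    _ ≤ f.natDegree * wdeg w1 w2 u := Nat.mul_le_mul_right _ hk'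


lemma single_add_ne (i : Fin 2) (k : ℕ) :
    Finsupp.single i k + Finsupp.single i 1 ≠ 0 := by
  intro h
  have := DFunLike.congr_fun h i
  simp [Finsupp.single_apply] at this

lemma coeff_proj0 (p : MvPolynomial (Fin 2) ℂ) :
    ∀ n : ℕ, (MvPolynomial.aeval ![(Polynomial.X : Polynomial ℂ), 0] p).coeff n
      = p.coeff (Finsupp.single 0 n) := by
  induction p using MvPolynomial.induction_on with
  | C c =>
      intro n
      cases n with
      | zero => simp
      | succ k =>
          have h1 := single_add_ne (0 : Fin 2) k
          simp [coeff_C, Polynomial.coeff_C, h1, Ne.symm h1]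
  | add p q hp hq => intro n; simp [hp, hq]
  | mul_X p i hp =>
      intro n
      fin_cases i
      · rw [map_mul, aeval_X]
        simp only [Fin.zero_eta, Matrix.cons_val_zero]
        cases n with
        | zero =>
            rw [Polynomial.coeff_mul_X_zero, MvPolynomial.coeff_mul_X']
            simp
        | succ k =>
            rw [Polynomial.coeff_mul_X, hp]
            have h2 : Finsupp.single (0 : Fin 2) (k + 1) = Finsupp.single 0 k + Finsupp.single 0 1 := by
              rw [← Finsupp.single_add]
            rw [h2, MvPolynomial.coeff_mul_X]
      · rw [map_mul, aeval_X]
        simp only [Fin.mk_one, Matrix.cons_val_one, Matrix.head_cons, Matrix.cons_val_zero]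
        rw [mul_zero, MvPolynomial.coeff_mul_X']
        simp [Finsupp.single_apply]

lemma coeff_proj1 (p : MvPolynomial (Fin 2) ℂ) :
    ∀ n : ℕ, (MvPolynomial.aeval ![0, (Polynomial.X : Polynomial ℂ)] p).coeff n
      = p.coeff (Finsupp.single 1 n) := by
  induction p using MvPolynomial.induction_on with
  | C c =>
      intro n
      cases n with
      | zero => simp
      | succ k =>
          have h1 := single_add_ne (1 : Fin 2) k
          simp [coeff_C, Polynomial.coeff_C, h1, Ne.symm h1]
  | add p q hp hq => intro n; simp [hp, hq]
  | mul_X p i hp =>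
      intro n
      fin_cases i
      · rw [map_mul, aeval_X]
        simp only [Fin.zero_eta, Matrix.cons_val_zero]
        rw [mul_zero, MvPolynomial.coeff_mul_X']
        simp [Finsupp.single_apply]
      · rw [map_mul, aeval_X]
        simp only [Fin.mk_one, Matrix.cons_val_one, Matrix.head_cons, Matrix.cons_val_zero]
        cases n with
        | zero =>
            rw [Polynomial.coeff_mul_X_zero, MvPolynomial.coeff_mul_X']
            simp
        | succ k =>
            rw [Polynomial.coeff_mul_X, hp]
            have h2 : Finsupp.single (1 : Fin 2) (k + 1) = Finsupp.single 1 k + Finsupp.single 1 1 := by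
              rw [← Finsupp.single_add]
            rw [h2, MvPolynomial.coeff_mul_X]

lemma fin2_ext {m m' : Fin 2 →₀ ℕ} (h0 : m 0 = m' 0) (h1 : m 1 = m' 1) : m = m' := by
  ext i
  fin_cases i
  · exact h0
  · exact h1

lemma deg_le {p : MvPolynomial (Fin 2) ℂ} {m : Fin 2 →₀ ℕ} (h : coeff m p ≠ 0) :
    m 0 + m 1 ≤ p.totalDegree := by
  have hmem : m ∈ p.support := mem_support_iff.2 h
  have : (m.sum fun _ e => e) ≤ p.totalDegree :=
    Finset.le_sup (f := fun s => s.sum fun _ e => e) hmem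
  rwa [Finsupp.sum_fintype _ _ (fun _ => rfl), Fin.sum_univ_two] at this

lemma affine_decomp {p : MvPolynomial (Fin 2) ℂ} (h : p.totalDegree ≤ 1) :
    p = C (coeff 0 p) + C (coeff (Finsupp.single 0 1) p) * X 0
      + C (coeff (Finsupp.single 1 1) p) * X 1 := by
  apply MvPolynomial.ext
  intro m
  rw [coeff_add, coeff_add, coeff_C, coeff_C_mul, coeff_C_mul, coeff_X', coeff_X']
  by_cases h0 : m 0 = 0 <;> by_cases h1 : m 1 = 0
  · have hm : m = 0 := fin2_ext (by simpa using h0) (by simpa using h1)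
    subst hm
    have e1 : Finsupp.single (0 : Fin 2) 1 ≠ (0 : Fin 2 →₀ ℕ) := by
      intro h'; simpa using DFunLike.congr_fun h' 0
    have e2 : Finsupp.single (1 : Fin 2) 1 ≠ (0 : Fin 2 →₀ ℕ) := by
      intro h'; simpa using DFunLike.congr_fun h' 1
    simp [e1, e2]
  · -- m 0 = 0, m 1 ≠ 0
    by_cases h1' : m 1 = 1
    · have hm : m = Finsupp.single 1 1 :=
        fin2_ext (by simp [Finsupp.single_apply, h0]) (by simp [Finsupp.single_apply, h1'])
      subst hm
      have e0 : (Finsupp.single (1:Fin 2) 1) ≠ 0 := by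
        intro h'; simpa using DFunLike.congr_fun h' 1
      have e1 : Finsupp.single (0 : Fin 2) 1 ≠ Finsupp.single (1:Fin 2) 1 := by
        intro h'; simpa using DFunLike.congr_fun h' 0
      simp [e0, e1, Ne.symm e0]
    · have hc : coeff m p = 0 := by
        by_contra hc
        have := deg_le hc
        omega
      have e0 : m ≠ 0 := by intro h'; exact h1 (by simpa using DFunLike.congr_fun h' 1)
      have e1 : Finsupp.single (0 : Fin 2) 1 ≠ m := by
        intro h'; exact h1 (by simpa [Finsupp.single_apply] using (DFunLike.congr_fun h' 1).symm)
      have e2 : Finsupp.single (1 : Fin 2) 1 ≠ m := by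
        intro h'; exact h1' (by simpa [Finsupp.single_apply] using (DFunLike.congr_fun h' 1).symm)
      simp [hc, e0, e1, e2, Ne.symm e0]
  · -- m 0 ≠ 0, m 1 = 0
    by_cases h0' : m 0 = 1
    · have hm : m = Finsupp.single 0 1 :=
        fin2_ext (by simp [Finsupp.single_apply, h0']) (by simp [Finsupp.single_apply, h1])
      subst hm
      have e0 : (Finsupp.single (0:Fin 2) 1) ≠ 0 := by
        intro h'; simpa using DFunLike.congr_fun h' 0
      have e2 : Finsupp.single (1 : Fin 2) 1 ≠ Finsupp.single (0:Fin 2) 1 := by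
        intro h'; simpa using DFunLike.congr_fun h' 1
      simp [e0, e2, Ne.symm e0]
    · have hc : coeff m p = 0 := by
        by_contra hc
        have := deg_le hc
        omega
      have e0 : m ≠ 0 := by intro h'; exact h0 (by simpa using DFunLike.congr_fun h' 0)
      have e1 : Finsupp.single (0 : Fin 2) 1 ≠ m := by
        intro h'; exact h0' (by simpa [Finsupp.single_apply] using (DFunLike.congr_fun h' 0).symm)
      have e2 : Finsupp.single (1 : Fin 2) 1 ≠ m := by
        intro h'; exact h0 (by simpa [Finsupp.single_apply] using (DFunLike.congr_fun h' 0).symm)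
      simp [hc, e0, e1, e2, Ne.symm e0]
  · have hc : coeff m p = 0 := by
      by_contra hc
      have := deg_le hc
      omega
    have e0 : m ≠ 0 := by intro h'; exact h0 (by simpa using DFunLike.congr_fun h' 0)
    have e1 : Finsupp.single (0 : Fin 2) 1 ≠ m := by
      intro h'; exact h1 (by simpa [Finsupp.single_apply] using (DFunLike.congr_fun h' 1).symm)
    have e2 : Finsupp.single (1 : Fin 2) 1 ≠ m := by
      intro h'; exact h0 (by simpa [Finsupp.single_apply] using (DFunLike.congr_fun h' 0).symm)
    simp [hc, e0, e1, e2, Ne.symm e0]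

lemma affdeg (c a : ℂ) : (Polynomial.C c + Polynomial.C a * Polynomial.X).natDegree ≤ 1 :=
  le_trans (Polynomial.natDegree_add_le _ _) (by
    simp only [Polynomial.natDegree_C]
    exact le_trans (max_le_max (le_refl 0) (le_trans (Polynomial.natDegree_C_mul_le a Polynomial.X) Polynomial.natDegree_X_le)) (by simp))

lemma affdeg_eq {a : ℂ} (ha : a ≠ 0) (c : ℂ) : (Polynomial.C c + Polynomial.C a * Polynomial.X).natDegree = 1 := by
  rw [add_comm, Polynomial.natDegree_add_C, Polynomial.natDegree_C_mul_X a ha]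

lemma afflead {a : ℂ} (ha : a ≠ 0) (c : ℂ) : (Polynomial.C c + Polynomial.C a * Polynomial.X).leadingCoeff = a := by
  rw [Polynomial.leadingCoeff, affdeg_eq ha, Polynomial.coeff_add, Polynomial.coeff_C, Polynomial.coeff_C_mul, Polynomial.coeff_X_one]
  simp

lemma comp_coeff_top {f : Polynomial ℂ} {a : ℂ} (ha : a ≠ 0) (hf : 1 < f.natDegree) (c : ℂ) :
    (Polynomial.aeval (Polynomial.C c + Polynomial.C a * Polynomial.X) f).coeff f.natDegree = f.leadingCoeff * a ^ f.natDegree := by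
  rw [← Polynomial.comp_eq_aeval]
  have hdeg : (f.comp (Polynomial.C c + Polynomial.C a * Polynomial.X)).natDegree = f.natDegree := by
    rw [Polynomial.natDegree_comp, affdeg_eq ha, mul_one]
  have hne : (Polynomial.C c + Polynomial.C a * Polynomial.X).natDegree ≠ 0 := by rw [affdeg_eq ha]; omega
  calc (f.comp (Polynomial.C c + Polynomial.C a * Polynomial.X)).coeff f.natDegree
      = (f.comp (Polynomial.C c + Polynomial.C a * Polynomial.X)).leadingCoeff := by rw [← hdeg, Polynomial.coeff_natDegree]
    _ = f.leadingCoeff * (Polynomial.C c + Polynomial.C a * Polynomial.X).leadingCoeff ^ f.natDegree := Polynomial.leadingCoeff_comp hne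
    _ = f.leadingCoeff * a ^ f.natDegree := by rw [afflead ha]

lemma poly_top {f : Polynomial ℂ} {a : ℂ} (ha : a ≠ 0) (hf : 1 < f.natDegree)
    (c c' a' α β γ : ℂ) :
    (Polynomial.C γ + Polynomial.C α * (Polynomial.C c + Polynomial.C a * Polynomial.X) +
      Polynomial.C β * ((Polynomial.C c' + Polynomial.C a' * Polynomial.X) + Polynomial.aeval (Polynomial.C c + Polynomial.C a * Polynomial.X) f)).coeff f.natDegree
      = β * (f.leadingCoeff * a ^ f.natDegree) := by
  have h0 : (Polynomial.C γ : Polynomial ℂ).coeff f.natDegree = 0 := by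
    rw [Polynomial.coeff_C]; simp; omega
  have h1 : (Polynomial.C c + Polynomial.C a * Polynomial.X : Polynomial ℂ).coeff f.natDegree = 0 :=
    Polynomial.coeff_eq_zero_of_natDegree_lt (lt_of_le_of_lt (affdeg c a) hf)
  have h2 : (Polynomial.C c' + Polynomial.C a' * Polynomial.X : Polynomial ℂ).coeff f.natDegree = 0 :=
    Polynomial.coeff_eq_zero_of_natDegree_lt (lt_of_le_of_lt (affdeg c' a') hf)
  rw [Polynomial.coeff_add, Polynomial.coeff_add, Polynomial.coeff_C_mul, Polynomial.coeff_C_mul, h0, h1, Polynomial.coeff_add, h2,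
    comp_coeff_top ha hf]
  ring

lemma poly_top_ne {f : Polynomial ℂ} {a β : ℂ} (ha : a ≠ 0) (hβ : β ≠ 0) (hf : 1 < f.natDegree) :
    β * (f.leadingCoeff * a ^ f.natDegree) ≠ 0 := by
  have hf0 : f ≠ 0 := Polynomial.ne_zero_of_natDegree_gt (n := 0) (by omega)
  exact mul_ne_zero hβ (mul_ne_zero (Polynomial.leadingCoeff_ne_zero.2 hf0) (pow_ne_zero _ ha))

lemma poly_lin (f : Polynomial ℂ) (c c' b' α β γ : ℂ) :
    (Polynomial.C γ + Polynomial.C α * Polynomial.C c + Polynomial.C β * ((Polynomial.C c' + Polynomial.C b' * Polynomial.X) + Polynomial.aeval (Polynomial.C c : Polynomial ℂ) f)).coeff 1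
      = β * b' := by
  rw [← Polynomial.comp_eq_aeval, Polynomial.comp_C]
  simp [Polynomial.coeff_C]

lemma poly_lin0 (c a α γ : ℂ) :
    (Polynomial.C γ + Polynomial.C α * (Polynomial.C c + Polynomial.C a * Polynomial.X) : Polynomial ℂ).coeff 1 = α * a := by
  simp [Polynomial.coeff_C]
section CompLemmas

variable {w1 w2 : ℕ} {f : Polynomial ℂ} {a b c a' b' c' α β γ : ℂ}

lemma proj0P : (MvPolynomial.aeval ![(Polynomial.X : Polynomial ℂ), 0])
    (C γ + C α * (C c + C a * X 0 + C b * X 1) +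
      C β * ((C c' + C a' * X 0 + C b' * X 1) +
        Polynomial.aeval (C c + C a * X 0 + C b * X 1) f))
    = Polynomial.C γ + Polynomial.C α * (Polynomial.C c + Polynomial.C a * Polynomial.X) +
      Polynomial.C β * ((Polynomial.C c' + Polynomial.C a' * Polynomial.X) +
        Polynomial.aeval (Polynomial.C c + Polynomial.C a * Polynomial.X) f) := by
  have key : ∀ q : MvPolynomial (Fin 2) ℂ,
      (MvPolynomial.aeval ![(Polynomial.X : Polynomial ℂ), 0]) (Polynomial.aeval q f)
        = Polynomial.aeval ((MvPolynomial.aeval ![(Polynomial.X : Polynomial ℂ), 0]) q) f :=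
    fun q => (Polynomial.aeval_algHom_apply _ q f).symm
  simp [key, mul_zero, add_zero, MvPolynomial.algebraMap_eq, Polynomial.algebraMap_eq]

lemma proj1P : (MvPolynomial.aeval ![0, (Polynomial.X : Polynomial ℂ)])
    (C γ + C α * (C c + C a * X 0 + C b * X 1) +
      C β * ((C c' + C a' * X 0 + C b' * X 1) +
        Polynomial.aeval (C c + C a * X 0 + C b * X 1) f))
    = Polynomial.C γ + Polynomial.C α * (Polynomial.C c + Polynomial.C b * Polynomial.X) +
      Polynomial.C β * ((Polynomial.C c' + Polynomial.C b' * Polynomial.X) +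
        Polynomial.aeval (Polynomial.C c + Polynomial.C b * Polynomial.X) f) := by
  have key : ∀ q : MvPolynomial (Fin 2) ℂ,
      (MvPolynomial.aeval ![0, (Polynomial.X : Polynomial ℂ)]) (Polynomial.aeval q f)
        = Polynomial.aeval ((MvPolynomial.aeval ![0, (Polynomial.X : Polynomial ℂ)]) q) f :=
    fun q => (Polynomial.aeval_algHom_apply _ q f).symm
  simp [key, mul_zero, add_zero, MvPolynomial.algebraMap_eq, Polynomial.algebraMap_eq]

lemma weight01 : (Finsupp.single (0 : Fin 2) 1) 0 * w1 + (Finsupp.single (0 : Fin 2) 1) 1 * w2 = w1 := by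
  simp [Finsupp.single_apply]

lemma weight11 : (Finsupp.single (1 : Fin 2) 1) 0 * w1 + (Finsupp.single (1 : Fin 2) 1) 1 * w2 = w2 := by
  simp [Finsupp.single_apply]

lemma weight0n (n : ℕ) : (Finsupp.single (0 : Fin 2) n) 0 * w1 + (Finsupp.single (0 : Fin 2) n) 1 * w2 = n * w1 := by
  simp [Finsupp.single_apply]

lemma weight1n (n : ℕ) : (Finsupp.single (1 : Fin 2) n) 0 * w1 + (Finsupp.single (1 : Fin 2) n) 1 * w2 = n * w2 := by
  simp [Finsupp.single_apply]

lemma wdeg_u_le (c a b : ℂ) : wdeg w1 w2 (C c + C a * X 0 + C b * X 1) ≤ max w1 w2 := by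
  have h1 := wdeg_add_le (w1 := w1) (w2 := w2) (C c + C a * X 0) (C b * X 1)
  have h2 := wdeg_add_le (w1 := w1) (w2 := w2) (C c) (C a * X 0)
  have h3 := wdeg_mul_le (w1 := w1) (w2 := w2) (C a) (X 0)
  have h4 := wdeg_mul_le (w1 := w1) (w2 := w2) (C b) (X 1)
  have h5 := wdeg_C_le (w1 := w1) (w2 := w2) c
  have h6 := wdeg_C_le (w1 := w1) (w2 := w2) a
  have h7 := wdeg_C_le (w1 := w1) (w2 := w2) b
  have h8 := wdeg_X0_le (w1 := w1) (w2 := w2)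
  have h9 := wdeg_X1_le (w1 := w1) (w2 := w2)
  omega

lemma wdeg_u_le_b0 (c a : ℂ) : wdeg w1 w2 (C c + C a * X 0 + C (0:ℂ) * X 1) ≤ w1 := by
  rw [map_zero, zero_mul, add_zero]
  have h2 := wdeg_add_le (w1 := w1) (w2 := w2) (C c) (C a * X 0)
  have h3 := wdeg_mul_le (w1 := w1) (w2 := w2) (C a) (X 0)
  have h5 := wdeg_C_le (w1 := w1) (w2 := w2) c
  have h6 := wdeg_C_le (w1 := w1) (w2 := w2) a
  have h8 := wdeg_X0_le (w1 := w1) (w2 := w2)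
  omega

lemma wdeg_u_le_a0 (c b : ℂ) : wdeg w1 w2 (C c + C (0:ℂ) * X 0 + C b * X 1) ≤ w2 := by
  rw [map_zero, zero_mul, add_zero]
  have h2 := wdeg_add_le (w1 := w1) (w2 := w2) (C c) (C b * X 1)
  have h3 := wdeg_mul_le (w1 := w1) (w2 := w2) (C b) (X 1)
  have h5 := wdeg_C_le (w1 := w1) (w2 := w2) c
  have h6 := wdeg_C_le (w1 := w1) (w2 := w2) b
  have h8 := wdeg_X1_le (w1 := w1) (w2 := w2)
  omega

lemma wdeg_P_le {u v : MvPolynomial (Fin 2) ℂ} {du dv : ℕ}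
    (hu : wdeg w1 w2 u ≤ du) (hv : wdeg w1 w2 v ≤ dv) :
    wdeg w1 w2 (C γ + C α * u + C β * (v + Polynomial.aeval u f))
      ≤ max du (max dv (f.natDegree * du)) := by
  have h1 := wdeg_add_le (w1 := w1) (w2 := w2) (C γ + C α * u) (C β * (v + Polynomial.aeval u f))
  have h2 := wdeg_add_le (w1 := w1) (w2 := w2) (C γ) (C α * u)
  have h3 := wdeg_mul_le (w1 := w1) (w2 := w2) (C α) u
  have h4 := wdeg_mul_le (w1 := w1) (w2 := w2) (C β) (v + Polynomial.aeval u f)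
  have h5 := wdeg_add_le (w1 := w1) (w2 := w2) v (Polynomial.aeval u f)
  have h6 := wdeg_aeval_le (w1 := w1) (w2 := w2) u f
  have h7 := wdeg_C_le (w1 := w1) (w2 := w2) γ
  have h8 := wdeg_C_le (w1 := w1) (w2 := w2) α
  have h9 := wdeg_C_le (w1 := w1) (w2 := w2) β
  have h10 : f.natDegree * wdeg w1 w2 u ≤ f.natDegree * du := Nat.mul_le_mul_left _ hu
  omega

end CompLemmas
section CaseLemmas

variable {w1 w2 : ℕ} {f : Polynomial ℂ} {a b c a' b' c' α β γ : ℂ}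

lemma proj0_aff : (MvPolynomial.aeval ![(Polynomial.X : Polynomial ℂ), 0])
    (C γ + C α * (C c + C a * X 0)) =
    Polynomial.C γ + Polynomial.C α * (Polynomial.C c + Polynomial.C a * Polynomial.X) := by
  simp only [map_add, map_mul, MvPolynomial.aeval_C, MvPolynomial.aeval_X,
    Matrix.cons_val_zero, MvPolynomial.algebraMap_eq, Polynomial.algebraMap_eq]

lemma proj1_aff : (MvPolynomial.aeval ![0, (Polynomial.X : Polynomial ℂ)])
    (C γ + C α * (C c + C b * X 1)) =
    Polynomial.C γ + Polynomial.C α * (Polynomial.C c + Polynomial.C b * Polynomial.X) := by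
  simp only [map_add, map_mul, MvPolynomial.aeval_C, MvPolynomial.aeval_X,
    Matrix.cons_val_one, Matrix.head_cons, Matrix.cons_val_zero, MvPolynomial.algebraMap_eq, Polynomial.algebraMap_eq]

lemma proj0_aff2 : (MvPolynomial.aeval ![(Polynomial.X : Polynomial ℂ), 0])
    (C γ + C α * (C c + C a * X 0 + C b * X 1)) =
    Polynomial.C γ + Polynomial.C α * (Polynomial.C c + Polynomial.C a * Polynomial.X) := by
  simp only [map_add, map_mul, MvPolynomial.aeval_C, MvPolynomial.aeval_X,
    Matrix.cons_val_zero, Matrix.cons_val_one, Matrix.head_cons,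
    MvPolynomial.algebraMap_eq, Polynomial.algebraMap_eq, mul_zero, add_zero]

lemma proj1_aff2 : (MvPolynomial.aeval ![0, (Polynomial.X : Polynomial ℂ)])
    (C γ + C α * (C c + C a * X 0 + C b * X 1)) =
    Polynomial.C γ + Polynomial.C α * (Polynomial.C c + Polynomial.C b * Polynomial.X) := by
  simp only [map_add, map_mul, MvPolynomial.aeval_C, MvPolynomial.aeval_X,
    Matrix.cons_val_zero, Matrix.cons_val_one, Matrix.head_cons,
    MvPolynomial.algebraMap_eq, Polynomial.algebraMap_eq, mul_zero, add_zero, zero_add]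

/-- Case: b = 0, β = 0. -/
lemma case_b0_β0 (ha : a ≠ 0) (hα : α ≠ 0) (q : MvPolynomial (Fin 2) ℂ) :
    wdeg w1 w2 (C γ + C α * (C c + C a * X 0 + C (0:ℂ) * X 1) + C (0:ℂ) * q) = w1 := by
  simp only [map_zero, zero_mul, add_zero]
  apply le_antisymm
  · have h1 := wdeg_add_le (w1 := w1) (w2 := w2) (C γ) (C α * (C c + C a * X 0))
    have h2 := wdeg_mul_le (w1 := w1) (w2 := w2) (C α) (C c + C a * X 0)
    have h3 := wdeg_add_le (w1 := w1) (w2 := w2) (C c) (C a * X 0)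
    have h4 := wdeg_mul_le (w1 := w1) (w2 := w2) (C a) (X 0)
    have h5 := wdeg_C_le (w1 := w1) (w2 := w2) γ
    have h6 := wdeg_C_le (w1 := w1) (w2 := w2) α
    have h7 := wdeg_C_le (w1 := w1) (w2 := w2) c
    have h8 := wdeg_C_le (w1 := w1) (w2 := w2) a
    have h9 := wdeg_X0_le (w1 := w1) (w2 := w2)
    omega
  · have hcoeff : MvPolynomial.coeff (Finsupp.single 0 1)
        (C γ + C α * (C c + C a * X 0) : MvPolynomial (Fin 2) ℂ) = α * a := by
      rw [← coeff_proj0, proj0_aff, poly_lin0]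
    have := le_wdeg (w1 := w1) (w2 := w2)
      (m := Finsupp.single 0 1) (by rw [hcoeff]; exact mul_ne_zero hα ha)
    rwa [weight01] at this

/-- Case: a = 0, β = 0. -/
lemma case_a0_β0 (hb : b ≠ 0) (hα : α ≠ 0) (q : MvPolynomial (Fin 2) ℂ) :
    wdeg w1 w2 (C γ + C α * (C c + C (0:ℂ) * X 0 + C b * X 1) + C (0:ℂ) * q) = w2 := by
  simp only [map_zero, zero_mul, add_zero, zero_add]
  apply le_antisymm
  · have h1 := wdeg_add_le (w1 := w1) (w2 := w2) (C γ) (C α * (C c + C b * X 1))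
    have h2 := wdeg_mul_le (w1 := w1) (w2 := w2) (C α) (C c + C b * X 1)
    have h3 := wdeg_add_le (w1 := w1) (w2 := w2) (C c) (C b * X 1)
    have h4 := wdeg_mul_le (w1 := w1) (w2 := w2) (C b) (X 1)
    have h5 := wdeg_C_le (w1 := w1) (w2 := w2) γ
    have h6 := wdeg_C_le (w1 := w1) (w2 := w2) α
    have h7 := wdeg_C_le (w1 := w1) (w2 := w2) c
    have h8 := wdeg_C_le (w1 := w1) (w2 := w2) b
    have h9 := wdeg_X1_le (w1 := w1) (w2 := w2)
    omega
  · have hcoeff : MvPolynomial.coeff (Finsupp.single 1 1)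
        (C γ + C α * (C c + C b * X 1) : MvPolynomial (Fin 2) ℂ) = α * b := by
      rw [← coeff_proj1, proj1_aff, poly_lin0]
    have := le_wdeg (w1 := w1) (w2 := w2)
      (m := Finsupp.single 1 1) (by rw [hcoeff]; exact mul_ne_zero hα hb)
    rwa [weight11] at this

/-- Case: a ≠ 0, b ≠ 0, β = 0. -/
lemma case_ab_β0 (ha : a ≠ 0) (hb : b ≠ 0) (hα : α ≠ 0) (q : MvPolynomial (Fin 2) ℂ) :
    wdeg w1 w2 (C γ + C α * (C c + C a * X 0 + C b * X 1) + C (0:ℂ) * q) = max w1 w2 := by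
  simp only [map_zero, zero_mul, add_zero]
  apply le_antisymm
  · have h1 := wdeg_add_le (w1 := w1) (w2 := w2) (C γ) (C α * (C c + C a * X 0 + C b * X 1))
    have h2 := wdeg_mul_le (w1 := w1) (w2 := w2) (C α) (C c + C a * X 0 + C b * X 1)
    have h5 := wdeg_C_le (w1 := w1) (w2 := w2) γ
    have h6 := wdeg_C_le (w1 := w1) (w2 := w2) α
    have h7 := wdeg_u_le (w1 := w1) (w2 := w2) c a b
    omega
  · have hc0 : MvPolynomial.coeff (Finsupp.single 0 1)
        (C γ + C α * (C c + C a * X 0 + C b * X 1) : MvPolynomial (Fin 2) ℂ) = α * a := by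
      rw [← coeff_proj0, proj0_aff2, poly_lin0]
    have hc1 : MvPolynomial.coeff (Finsupp.single 1 1)
        (C γ + C α * (C c + C a * X 0 + C b * X 1) : MvPolynomial (Fin 2) ℂ) = α * b := by
      rw [← coeff_proj1, proj1_aff2, poly_lin0]
    have l0 := le_wdeg (w1 := w1) (w2 := w2)
      (m := Finsupp.single 0 1) (by rw [hc0]; exact mul_ne_zero hα ha)
    have l1 := le_wdeg (w1 := w1) (w2 := w2)
      (m := Finsupp.single 1 1) (by rw [hc1]; exact mul_ne_zero hα hb)
    rw [weight01] at l0
    rw [weight11] at l1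
    exact max_le l0 l1

end CaseLemmas
section CaseLemmas2

variable {w1 w2 : ℕ} {f : Polynomial ℂ} {a b c a' b' c' α β γ : ℂ}

/-- Case: b = 0, β ≠ 0. -/
lemma case_b0_βne (hf : 1 < f.natDegree) (ha : a ≠ 0) (hb' : b' ≠ 0) (hβ : β ≠ 0) :
    wdeg w1 w2 (C γ + C α * (C c + C a * X 0 + C (0:ℂ) * X 1) +
      C β * ((C c' + C a' * X 0 + C b' * X 1) +
        Polynomial.aeval (C c + C a * X 0 + C (0:ℂ) * X 1) f))
      = max w2 (f.natDegree * w1) := by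
  apply le_antisymm
  · have h := wdeg_P_le (w1 := w1) (w2 := w2) (f := f) (α := α) (β := β) (γ := γ)
      (wdeg_u_le_b0 c a) (wdeg_u_le c' a' b')
    have h2 : w1 ≤ f.natDegree * w1 := Nat.le_mul_of_pos_left w1 (by omega)
    omega
  · have hcY : MvPolynomial.coeff (Finsupp.single 1 1)
        ((C γ + C α * (C c + C a * X 0 + C (0:ℂ) * X 1) +
          C β * ((C c' + C a' * X 0 + C b' * X 1) +
            Polynomial.aeval (C c + C a * X 0 + C (0:ℂ) * X 1) f)) : MvPolynomial (Fin 2) ℂ) = β * b' := by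
      rw [← coeff_proj1, proj1P]
      simp only [map_zero, zero_mul, add_zero]
      exact poly_lin f c c' b' α β γ
    have hcX : MvPolynomial.coeff (Finsupp.single 0 f.natDegree)
        ((C γ + C α * (C c + C a * X 0 + C (0:ℂ) * X 1) +
          C β * ((C c' + C a' * X 0 + C b' * X 1) +
            Polynomial.aeval (C c + C a * X 0 + C (0:ℂ) * X 1) f)) : MvPolynomial (Fin 2) ℂ)
        = β * (f.leadingCoeff * a ^ f.natDegree) := by
      rw [← coeff_proj0, proj0P]
      exact poly_top ha hf c c' a' α β γ
    have l0 := le_wdeg (w1 := w1) (w2 := w2)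
      (m := Finsupp.single 1 1) (by rw [hcY]; exact mul_ne_zero hβ hb')
    have l1 := le_wdeg (w1 := w1) (w2 := w2)
      (m := Finsupp.single 0 f.natDegree) (by rw [hcX]; exact poly_top_ne ha hβ hf)
    rw [weight11] at l0
    rw [weight0n] at l1
    exact max_le l0 l1

/-- Case: a = 0, β ≠ 0. -/
lemma case_a0_βne (hf : 1 < f.natDegree) (hb : b ≠ 0) (ha' : a' ≠ 0) (hβ : β ≠ 0) :
    wdeg w1 w2 (C γ + C α * (C c + C (0:ℂ) * X 0 + C b * X 1) +
      C β * ((C c' + C a' * X 0 + C b' * X 1) +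
        Polynomial.aeval (C c + C (0:ℂ) * X 0 + C b * X 1) f))
      = max w1 (f.natDegree * w2) := by
  apply le_antisymm
  · have h := wdeg_P_le (w1 := w1) (w2 := w2) (f := f) (α := α) (β := β) (γ := γ)
      (wdeg_u_le_a0 c b) (wdeg_u_le c' a' b')
    have h2 : w2 ≤ f.natDegree * w2 := Nat.le_mul_of_pos_left w2 (by omega)
    omega
  · have hcX : MvPolynomial.coeff (Finsupp.single 0 1)
        ((C γ + C α * (C c + C (0:ℂ) * X 0 + C b * X 1) +
          C β * ((C c' + C a' * X 0 + C b' * X 1) +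
            Polynomial.aeval (C c + C (0:ℂ) * X 0 + C b * X 1) f)) : MvPolynomial (Fin 2) ℂ) = β * a' := by
      rw [← coeff_proj0, proj0P]
      simp only [map_zero, zero_mul, add_zero]
      exact poly_lin f c c' a' α β γ
    have hcY : MvPolynomial.coeff (Finsupp.single 1 f.natDegree)
        ((C γ + C α * (C c + C (0:ℂ) * X 0 + C b * X 1) +
          C β * ((C c' + C a' * X 0 + C b' * X 1) +
            Polynomial.aeval (C c + C (0:ℂ) * X 0 + C b * X 1) f)) : MvPolynomial (Fin 2) ℂ)
        = β * (f.leadingCoeff * b ^ f.natDegree) := by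
      rw [← coeff_proj1, proj1P]
      exact poly_top hb hf c c' b' α β γ
    have l0 := le_wdeg (w1 := w1) (w2 := w2)
      (m := Finsupp.single 0 1) (by rw [hcX]; exact mul_ne_zero hβ ha')
    have l1 := le_wdeg (w1 := w1) (w2 := w2)
      (m := Finsupp.single 1 f.natDegree) (by rw [hcY]; exact poly_top_ne hb hβ hf)
    rw [weight01] at l0
    rw [weight1n] at l1
    exact max_le l0 l1

/-- Case: a ≠ 0, b ≠ 0, β ≠ 0. -/
lemma case_ab_βne (hf : 1 < f.natDegree) (ha : a ≠ 0) (hb : b ≠ 0) (hβ : β ≠ 0) :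
    wdeg w1 w2 (C γ + C α * (C c + C a * X 0 + C b * X 1) +
      C β * ((C c' + C a' * X 0 + C b' * X 1) +
        Polynomial.aeval (C c + C a * X 0 + C b * X 1) f))
      = f.natDegree * max w1 w2 := by
  apply le_antisymm
  · have h := wdeg_P_le (w1 := w1) (w2 := w2) (f := f) (α := α) (β := β) (γ := γ)
      (wdeg_u_le c a b) (wdeg_u_le c' a' b')
    have h2 : max w1 w2 ≤ f.natDegree * max w1 w2 :=
      Nat.le_mul_of_pos_left _ (by omega)
    omega
  · have hcX : MvPolynomial.coeff (Finsupp.single 0 f.natDegree)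
        ((C γ + C α * (C c + C a * X 0 + C b * X 1) +
          C β * ((C c' + C a' * X 0 + C b' * X 1) +
            Polynomial.aeval (C c + C a * X 0 + C b * X 1) f)) : MvPolynomial (Fin 2) ℂ)
        = β * (f.leadingCoeff * a ^ f.natDegree) := by
      rw [← coeff_proj0, proj0P]
      exact poly_top ha hf c c' a' α β γ
    have hcY : MvPolynomial.coeff (Finsupp.single 1 f.natDegree)
        ((C γ + C α * (C c + C a * X 0 + C b * X 1) +
          C β * ((C c' + C a' * X 0 + C b' * X 1) +
            Polynomial.aeval (C c + C a * X 0 + C b * X 1) f)) : MvPolynomial (Fin 2) ℂ)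
        = β * (f.leadingCoeff * b ^ f.natDegree) := by
      rw [← coeff_proj1, proj1P]
      exact poly_top hb hf c c' b' α β γ
    have l0 := le_wdeg (w1 := w1) (w2 := w2)
      (m := Finsupp.single 0 f.natDegree) (by rw [hcX]; exact poly_top_ne ha hβ hf)
    have l1 := le_wdeg (w1 := w1) (w2 := w2)
      (m := Finsupp.single 1 f.natDegree) (by rw [hcY]; exact poly_top_ne hb hβ hf)
    rw [weight0n] at l0
    rw [weight1n] at l1
    rcases le_total w1 w2 with h | h
    · rw [max_eq_right h]; exact l1
    · rw [max_eq_left h]; exact l0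

end CaseLemmas2
section Det

lemma ne010 : Finsupp.single (0:Fin 2) 1 ≠ (0 : Fin 2 →₀ ℕ) := by
  intro h; simpa using DFunLike.congr_fun h 0

lemma ne110 : Finsupp.single (1:Fin 2) 1 ≠ (0 : Fin 2 →₀ ℕ) := by
  intro h; simpa using DFunLike.congr_fun h 1

lemma ne0111 : Finsupp.single (0:Fin 2) 1 ≠ Finsupp.single (1:Fin 2) 1 := by
  intro h; simpa using DFunLike.congr_fun h 0

lemma affine_det' {L : PolyMap} (hA : IsPolyAut L) {a b c a' b' c' : ℂ}
    (hu : L.1 = C c + C a * X 0 + C b * X 1)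
    (hv : L.2 = C c' + C a' * X 0 + C b' * X 1) :
    a * b' ≠ b * a' := by
  intro hdet
  obtain ⟨G, hFG, _⟩ := hA
  have h1 := congrArg Prod.fst hFG
  have h2 := congrArg Prod.snd hFG
  simp only [pcomp] at h1 h2
  rw [hu] at h1
  rw [hv] at h2
  simp only [map_add, map_mul, aeval_C, aeval_X, Matrix.cons_val_zero, Matrix.cons_val_one,
    Matrix.head_cons, MvPolynomial.algebraMap_eq] at h1 h2
  -- h1 : C c + C a * G.1 + C b * G.2 = X 0
  -- h2 : C c' + C a' * G.1 + C b' * G.2 = X 1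
  have hab : a' * b = a * b' := by linear_combination -hdet
  have hz : (C a' * C b - C a * C b' : MvPolynomial (Fin 2) ℂ) = 0 := by
    rw [← C_mul, ← C_mul, ← map_sub, hab]
    simp
  have eqA : (C a' * X 0 - C a * X 1 : MvPolynomial (Fin 2) ℂ)
      = (C a' * C c - C a * C c') + (C a' * C b - C a * C b') * G.2 := by
    linear_combination (C a : MvPolynomial (Fin 2) ℂ) * h2 - C a' * h1
  rw [hz, zero_mul, add_zero] at eqA
  have hA0 := congrArg (MvPolynomial.coeff (Finsupp.single 0 1)) eqA
  have hA1 := congrArg (MvPolynomial.coeff (Finsupp.single 1 1)) eqA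
  simp [MvPolynomial.coeff_sub, coeff_C_mul, coeff_X', coeff_C,
    ne010, ne0111, Ne.symm ne0111, ne110, Ne.symm ne010, Ne.symm ne110, neg_eq_zero] at hA0 hA1
  -- hA0 : a' = 0, hA1 : a = 0
  have eqB : (C b' * X 0 - C b * X 1 : MvPolynomial (Fin 2) ℂ)
      = (C b' * C c - C b * C c') + (C b' * C a - C b * C a') * G.1 := by
    linear_combination (C b : MvPolynomial (Fin 2) ℂ) * h2 - C b' * h1
  rw [hA0, hA1] at eqB
  simp only [map_zero, mul_zero, zero_mul, sub_zero, zero_sub, mul_zero, neg_zero,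
    add_zero, zero_mul] at eqB
  have hB0 := congrArg (MvPolynomial.coeff (Finsupp.single 0 1)) eqB
  have hB1 := congrArg (MvPolynomial.coeff (Finsupp.single 1 1)) eqB
  simp [MvPolynomial.coeff_sub, coeff_C_mul, coeff_X', coeff_C,
    ne010, ne0111, Ne.symm ne0111, ne110, Ne.symm ne010, Ne.symm ne110, neg_eq_zero] at hB0 hB1
  -- hB0 : b' = 0, hB1 : b = 0
  have hcontra := congrArg (MvPolynomial.coeff (Finsupp.single 0 1)) h1
  rw [hA1, hB1] at hcontra
  simp [coeff_C, coeff_C_mul, coeff_X', ne010, Ne.symm ne010] at hcontra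

end Det
/-- Weighted bidegrees of automorphisms of the form `L2 ∘ T ∘ L1` with `L1, L2` affine and
`T(x,y) = (x, y + f(x))`, `deg f > 1`. -/
theorem stmt_5 (w1 w2 : ℕ) (hw1 : 0 < w1) (hw2 : 0 < w2) (F L1 L2 : PolyMap)
    (hL1 : IsAffineAut L1) (hL2 : IsAffineAut L2) (f : Polynomial ℂ) (hf : 1 < f.natDegree)
    (hF : F = pcomp L2 (pcomp (lowerT f) L1)) (hAut : IsPolyAut F)
    (d1 d2 : ℕ) (hd1 : d1 = wdeg w1 w2 F.1) (hd2 : d2 = wdeg w1 w2 F.2) :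
    (∃ k : ℕ, 0 < k ∧ w2 ≤ k * w1 ∧
      ((d1, d2) = (w1, k * w1) ∨ (d1, d2) = (k * w1, w1) ∨ (d1, d2) = (k * w1, k * w1))) ∨
    (∃ k : ℕ, 0 < k ∧ w1 ≤ k * w2 ∧
      ((d1, d2) = (w2, k * w2) ∨ (d1, d2) = (k * w2, w2) ∨ (d1, d2) = (k * w2, k * w2))) ∨
    (d1, d2) = (w1, w2) ∨ (d1, d2) = (w2, w1) ∨ (d1, d2) = (max w1 w2, max w1 w2) := by
  obtain ⟨hA1, hL11, hL12⟩ := hL1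
  obtain ⟨hA2, hL21, hL22⟩ := hL2
  obtain ⟨c, a, b, hu⟩ : ∃ c a b : ℂ, L1.1 = C c + C a * X 0 + C b * X 1 :=
    ⟨_, _, _, affine_decomp (le_of_eq hL11)⟩
  obtain ⟨c', a', b', hv⟩ : ∃ c' a' b' : ℂ, L1.2 = C c' + C a' * X 0 + C b' * X 1 :=
    ⟨_, _, _, affine_decomp (le_of_eq hL12)⟩
  obtain ⟨γ, α, β, hs⟩ : ∃ γ α β : ℂ, L2.1 = C γ + C α * X 0 + C β * X 1 :=
    ⟨_, _, _, affine_decomp (le_of_eq hL21)⟩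
  obtain ⟨γ', α', β', ht⟩ : ∃ γ' α' β' : ℂ, L2.2 = C γ' + C α' * X 0 + C β' * X 1 :=
    ⟨_, _, _, affine_decomp (le_of_eq hL22)⟩
  have hdet1 : a * b' ≠ b * a' := affine_det' hA1 hu hv
  have hdet2 : α * β' ≠ β * α' := affine_det' hA2 hs ht
  have hQ1 : (pcomp (lowerT f) L1).1 = L1.1 := by simp [pcomp, lowerT]
  have hQ2 : (pcomp (lowerT f) L1).2 = L1.2 + Polynomial.aeval L1.1 f := by
    simp only [pcomp, lowerT, map_add]
    congr 1
    · simp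
    · rw [← Polynomial.aeval_algHom_apply]
      simp
  have hF1 : F.1 = C γ + C α * (C c + C a * X 0 + C b * X 1) +
      C β * ((C c' + C a' * X 0 + C b' * X 1) +
        Polynomial.aeval (C c + C a * X 0 + C b * X 1) f) := by
    rw [hF]
    show MvPolynomial.aeval ![(pcomp (lowerT f) L1).1, (pcomp (lowerT f) L1).2] L2.1 = _
    rw [hQ1, hQ2, hs, hu, hv]
    simp only [map_add, map_mul, aeval_C, aeval_X, Matrix.cons_val_zero, Matrix.cons_val_one,
      Matrix.head_cons, MvPolynomial.algebraMap_eq]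
  have hF2 : F.2 = C γ' + C α' * (C c + C a * X 0 + C b * X 1) +
      C β' * ((C c' + C a' * X 0 + C b' * X 1) +
        Polynomial.aeval (C c + C a * X 0 + C b * X 1) f) := by
    rw [hF]
    show MvPolynomial.aeval ![(pcomp (lowerT f) L1).1, (pcomp (lowerT f) L1).2] L2.2 = _
    rw [hQ1, hQ2, ht, hu, hv]
    simp only [map_add, map_mul, aeval_C, aeval_X, Matrix.cons_val_zero, Matrix.cons_val_one,
      Matrix.head_cons, MvPolynomial.algebraMap_eq]
  rw [hF1] at hd1
  rw [hF2] at hd2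
  clear hF1 hF2 hF hQ1 hQ2 hu hv hs ht hAut
  by_cases hb0 : b = 0
  · rw [hb0] at hd1 hd2
    have ha : a ≠ 0 := fun h => hdet1 (by rw [h, hb0]; ring)
    have hb' : b' ≠ 0 := fun h => hdet1 (by rw [h, hb0]; ring)
    by_cases hβ : β = 0
    · have hα : α ≠ 0 := fun h => hdet2 (by rw [h, hβ]; ring)
      have hβ' : β' ≠ 0 := fun h => hdet2 (by rw [h, hβ]; ring)
      rw [hβ] at hd1
      rw [case_b0_β0 ha hα] at hd1
      rw [case_b0_βne hf ha hb' hβ'] at hd2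
      by_cases hcmp : w2 ≤ f.natDegree * w1
      · exact Or.inl ⟨f.natDegree, by omega, hcmp,
          Or.inl (by rw [hd1, hd2, max_eq_right hcmp])⟩
      · refine Or.inr (Or.inr (Or.inl ?_))
        rw [hd1, hd2, max_eq_left (by omega)]
    · by_cases hβ' : β' = 0
      · have hα' : α' ≠ 0 := fun h => hdet2 (by rw [h, hβ']; ring)
        rw [case_b0_βne hf ha hb' hβ] at hd1
        rw [hβ'] at hd2
        rw [case_b0_β0 ha hα'] at hd2
        by_cases hcmp : w2 ≤ f.natDegree * w1
        · exact Or.inl ⟨f.natDegree, by omega, hcmp,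
            Or.inr (Or.inl (by rw [hd1, hd2, max_eq_right hcmp]))⟩
        · refine Or.inr (Or.inr (Or.inr (Or.inl ?_)))
          rw [hd1, hd2, max_eq_left (by omega)]
      · rw [case_b0_βne hf ha hb' hβ] at hd1
        rw [case_b0_βne hf ha hb' hβ'] at hd2
        by_cases hcmp : w2 ≤ f.natDegree * w1
        · exact Or.inl ⟨f.natDegree, by omega, hcmp,
            Or.inr (Or.inr (by rw [hd1, hd2, max_eq_right hcmp]))⟩
        · have hle : w1 ≤ f.natDegree * w1 := Nat.le_mul_of_pos_left w1 (by omega)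
          refine Or.inr (Or.inl ⟨1, by omega, by omega,
            Or.inr (Or.inr ?_)⟩)
          rw [hd1, hd2, max_eq_left (by omega), one_mul]
  · by_cases ha0 : a = 0
    · rw [ha0] at hd1 hd2
      have hb : b ≠ 0 := hb0
      have ha' : a' ≠ 0 := fun h => hdet1 (by rw [ha0, h]; ring)
      by_cases hβ : β = 0
      · have hα : α ≠ 0 := fun h => hdet2 (by rw [h, hβ]; ring)
        have hβ' : β' ≠ 0 := fun h => hdet2 (by rw [h, hβ]; ring)
        rw [hβ] at hd1
        rw [case_a0_β0 hb hα] at hd1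
        rw [case_a0_βne hf hb ha' hβ'] at hd2
        by_cases hcmp : w1 ≤ f.natDegree * w2
        · exact Or.inr (Or.inl ⟨f.natDegree, by omega, hcmp,
            Or.inl (by rw [hd1, hd2, max_eq_right hcmp])⟩)
        · refine Or.inr (Or.inr (Or.inr (Or.inl ?_)))
          rw [hd1, hd2, max_eq_left (by omega)]
      · by_cases hβ' : β' = 0
        · have hα' : α' ≠ 0 := fun h => hdet2 (by rw [h, hβ']; ring)
          rw [case_a0_βne hf hb ha' hβ] at hd1
          rw [hβ'] at hd2
          rw [case_a0_β0 hb hα'] at hd2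
          by_cases hcmp : w1 ≤ f.natDegree * w2
          · exact Or.inr (Or.inl ⟨f.natDegree, by omega, hcmp,
              Or.inr (Or.inl (by rw [hd1, hd2, max_eq_right hcmp]))⟩)
          · refine Or.inr (Or.inr (Or.inl ?_))
            rw [hd1, hd2, max_eq_left (by omega)]
        · rw [case_a0_βne hf hb ha' hβ] at hd1
          rw [case_a0_βne hf hb ha' hβ'] at hd2
          by_cases hcmp : w1 ≤ f.natDegree * w2
          · exact Or.inr (Or.inl ⟨f.natDegree, by omega, hcmp,
              Or.inr (Or.inr (by rw [hd1, hd2, max_eq_right hcmp]))⟩)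
          · have hle : w2 ≤ f.natDegree * w2 := Nat.le_mul_of_pos_left w2 (by omega)
            refine Or.inl ⟨1, by omega, by omega, Or.inr (Or.inr ?_)⟩
            rw [hd1, hd2, max_eq_left (by omega), one_mul]
    · have ha : a ≠ 0 := ha0
      have hb : b ≠ 0 := hb0
      have hle1 : w1 ≤ f.natDegree * w1 := Nat.le_mul_of_pos_left w1 (by omega)
      have hle2 : w2 ≤ f.natDegree * w2 := Nat.le_mul_of_pos_left w2 (by omega)
      by_cases hβ : β = 0
      · have hα : α ≠ 0 := fun h => hdet2 (by rw [h, hβ]; ring)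
        have hβ' : β' ≠ 0 := fun h => hdet2 (by rw [h, hβ]; ring)
        rw [hβ] at hd1
        rw [case_ab_β0 ha hb hα] at hd1
        rw [case_ab_βne hf ha hb hβ'] at hd2
        rcases le_total w2 w1 with hw | hw
        · exact Or.inl ⟨f.natDegree, by omega, by omega,
            Or.inl (by rw [hd1, hd2, max_eq_left hw])⟩
        · exact Or.inr (Or.inl ⟨f.natDegree, by omega, by omega,
            Or.inl (by rw [hd1, hd2, max_eq_right hw])⟩)
      · by_cases hβ' : β' = 0
        · have hα' : α' ≠ 0 := fun h => hdet2 (by rw [h, hβ']; ring)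
          rw [case_ab_βne hf ha hb hβ] at hd1
          rw [hβ'] at hd2
          rw [case_ab_β0 ha hb hα'] at hd2
          rcases le_total w2 w1 with hw | hw
          · exact Or.inl ⟨f.natDegree, by omega, by omega,
              Or.inr (Or.inl (by rw [hd1, hd2, max_eq_left hw]))⟩
          · exact Or.inr (Or.inl ⟨f.natDegree, by omega, by omega,
              Or.inr (Or.inl (by rw [hd1, hd2, max_eq_right hw]))⟩)
        · rw [case_ab_βne hf ha hb hβ] at hd1
          rw [case_ab_βne hf ha hb hβ'] at hd2
          rcases le_total w2 w1 with hw | hw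
          · exact Or.inl ⟨f.natDegree, by omega, by omega,
              Or.inr (Or.inr (by rw [hd1, hd2, max_eq_left hw]))⟩
          · exact Or.inr (Or.inl ⟨f.natDegree, by omega, by omega,
              Or.inr (Or.inr (by rw [hd1, hd2, max_eq_right hw]))⟩)
end
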